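/- arXiv:0912.1068 — 9 statements merged into one kernel-verified Lean document; each statement's English description precedes it below -/
import Mathlib

section
/- Let d be a positive integer and let P ⊂ ℝ^d be a lattice d-simplex (the convex hull of d+1 affinely independent points of ℤ^d). If every edge of P has lattice length at least d(d+1), then P is covered by lattice parallelepipeds, i.e., every point of P lies in some lattice parallelepiped contained in P; in particular, P is integrally closed. -/
open Set Metric Pointwise

noncomputable section

/-- Points of the Euclidean space `ℝ^d`. -/
abbrev Pt (d : ℕ) : Type := EuclideanSpace ℝ (Fin d)

/-- `x` is a point of the standard lattice `ℤ^d ⊂ ℝ^d`. -/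
def IsLatticePt {d : ℕ} (x : Pt d) : Prop := ∀ i, ∃ n : ℤ, x i = (n : ℝ)

/-- `x` has rational coordinates. -/
def IsRatPt {d : ℕ} (x : Pt d) : Prop := ∀ i, ∃ q : ℚ, x i = (q : ℝ)

/-- `P` is a polytope with rational vertices. -/
def IsRationalPolytope {d : ℕ} (P : Set (Pt d)) : Prop :=
  ∃ V : Finset (Pt d), (∀ v ∈ V, IsRatPt v) ∧ P = convexHull ℝ (V : Set (Pt d))

/-- `P` is a polytope with integral vertices. -/
def IsLatticePolytope {d : ℕ} (P : Set (Pt d)) : Prop :=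
  ∃ V : Finset (Pt d), (∀ v ∈ V, IsLatticePt v) ∧ P = convexHull ℝ (V : Set (Pt d))

/-- The (affine) dimension of a set. -/
def polyDim {d : ℕ} (P : Set (Pt d)) : ℕ := Module.finrank ℝ (vectorSpan ℝ P)

/-- An integer vector is primitive if its components are coprime. -/
def IsPrimitive {d : ℕ} (u : Fin d → ℤ) : Prop := Finset.univ.gcd u = 1

/-- The segment `[v, w]` has lattice length at least `lb`: whenever `w - v = t • u` with
`u` a primitive integer vector and `t > 0`, one has `t ≥ lb`. -/
def LatLenGE {d : ℕ} (v w : Pt d) (lb : ℝ) : Prop :=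
  ∀ (u : Fin d → ℤ) (t : ℝ), 0 < t → IsPrimitive u →
    (∀ i, w i - v i = t * (u i : ℝ)) → lb ≤ t

/-- The segment `[v, w]` has lattice length greater than `lb`. -/
def LatLenGT {d : ℕ} (v w : Pt d) (lb : ℝ) : Prop :=
  ∀ (u : Fin d → ℤ) (t : ℝ), 0 < t → IsPrimitive u →
    (∀ i, w i - v i = t * (u i : ℝ)) → lb < t

/-- `[v, w]` is an edge (a one-dimensional face) of `P`. -/
def IsEdge {d : ℕ} (P : Set (Pt d)) (v w : Pt d) : Prop :=
  v ≠ w ∧ IsExtreme ℝ P (segment ℝ v w)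

/-- Every edge of `P` has lattice length at least `lb`. -/
def EdgeLengthsGE {d : ℕ} (P : Set (Pt d)) (lb : ℝ) : Prop :=
  ∀ v w, IsEdge P v w → LatLenGE v w lb

/-- Every edge of `P` has lattice length greater than `lb`. -/
def EdgeLengthsGT {d : ℕ} (P : Set (Pt d)) (lb : ℝ) : Prop :=
  ∀ v w, IsEdge P v w → LatLenGT v w lb

/-- The union `⋃ (x + P)` over all vertices `v` of `P` and all
`x ∈ (c-1)P ∩ ((c-1)v + ℤ^d)`. -/
def cnUnion {d : ℕ} (P : Set (Pt d)) (c : ℝ) : Set (Pt d) :=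
  {y | ∃ v ∈ Set.extremePoints ℝ P, ∃ x ∈ (c - 1) • P,
    IsLatticePt (x - (c - 1) • v) ∧ ∃ p ∈ P, y = x + p}

/-- `P` is `k`-convex-normal: `CN(d,k)`. -/
def ConvexNormal {d : ℕ} (k : ℚ) (P : Set (Pt d)) : Prop :=
  ∀ c : ℚ, 2 ≤ c → c ≤ k → (c : ℝ) • P = cnUnion P (c : ℝ)

/-- `P` is integrally closed. -/
def IntegrallyClosed {d : ℕ} (P : Set (Pt d)) : Prop :=
  ∀ c : ℕ, 0 < c → ∀ z ∈ (c : ℝ) • P, IsLatticePt z →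
    ∃ x : Fin c → Pt d, (∀ i, x i ∈ P ∧ IsLatticePt (x i)) ∧ ∑ i, x i = z

/-- A face of a polytope: a closed convex extreme subset. -/
def IsFaceOf {d : ℕ} (P F : Set (Pt d)) : Prop :=
  IsExtreme ℝ P F ∧ Convex ℝ F ∧ IsClosed F

/-- A facet: a face of codimension one. -/
def IsFacetOf {d : ℕ} (P F : Set (Pt d)) : Prop :=
  IsFaceOf P F ∧ polyDim F + 1 = polyDim P

/-- `width_F(P)`: the maximum over vertices `v` of `P` of `dist(v, aff F)`. -/
def facetWidth {d : ℕ} (P F : Set (Pt d)) : ℝ :=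
  sSup ((fun v => infDist v ((affineSpan ℝ F : AffineSubspace ℝ (Pt d)) : Set (Pt d))) ''
    Set.extremePoints ℝ P)

/-- `U_P(F, ε)`: the `ε`-layer of `P` along (the affine hull of) `F`. -/
def layer {d : ℕ} (P F : Set (Pt d)) (ε : ℝ) : Set (Pt d) :=
  {x ∈ P | infDist x ((affineSpan ℝ F : AffineSubspace ℝ (Pt d)) : Set (Pt d)) ≤ ε}

/-- `P` is `k`-boundary-convex-normal: `BCN(d,k)`. -/
def BCN {d : ℕ} (k : ℚ) (P : Set (Pt d)) : Prop :=
  ∀ F, IsFacetOf P F → ∀ c : ℚ, 2 ≤ c → c ≤ k →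
    layer ((c : ℝ) • P) ((c : ℝ) • F) (facetWidth P F / ((d : ℝ) + 1)) ⊆ cnUnion P (c : ℝ)

/-- The parallelepiped `z + {Σ λᵢ • wᵢ : 0 ≤ λᵢ ≤ 1}`. -/
def Parallelepiped {d m : ℕ} (z : Pt d) (w : Fin m → Pt d) : Set (Pt d) :=
  {x | ∃ lam : Fin m → ℝ, (∀ i, lam i ∈ Icc (0 : ℝ) 1) ∧ x = z + ∑ i, lam i • w i}

/-- `L` is a full-dimensional lattice parallelepiped. -/
def IsLatticeParallelepiped {d : ℕ} (L : Set (Pt d)) : Prop :=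
  ∃ (z : Pt d) (w : Fin d → Pt d), IsLatticePt z ∧ (∀ i, IsLatticePt (w i)) ∧
    LinearIndependent ℝ w ∧ L = Parallelepiped z w


/-! ### Auxiliary lemmas -/

lemma lat_add' {d : ℕ} {x y : Pt d} (hx : IsLatticePt x) (hy : IsLatticePt y) :
    IsLatticePt (x + y) := by
  intro i; obtain ⟨n, hn⟩ := hx i; obtain ⟨m, hm⟩ := hy i
  exact ⟨n + m, by show x i + y i = _; rw [hn, hm]; push_cast; ring⟩

lemma lat_sub' {d : ℕ} {x y : Pt d} (hx : IsLatticePt x) (hy : IsLatticePt y) :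
    IsLatticePt (x - y) := by
  intro i; obtain ⟨n, hn⟩ := hx i; obtain ⟨m, hm⟩ := hy i
  exact ⟨n - m, by show x i - y i = _; rw [hn, hm]; push_cast; ring⟩

lemma lat_zero' {d : ℕ} : IsLatticePt (0 : Pt d) := fun _ => ⟨0, by show (0:ℝ) = _; simp⟩

lemma lat_sum' {d : ℕ} {ι : Type*} (s : Finset ι) (f : ι → Pt d)
    (h : ∀ j ∈ s, IsLatticePt (f j)) : IsLatticePt (∑ j ∈ s, f j) := by
  classical
  induction s using Finset.induction_on with
  | empty => simpa using lat_zero'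
  | insert _ _ hnot ih =>
    rw [Finset.sum_insert hnot]
    exact lat_add' (h _ (Finset.mem_insert_self _ _))
      (ih fun j hj => h j (Finset.mem_insert_of_mem hj))

lemma lat_zsmul' {d : ℕ} {x : Pt d} (hx : IsLatticePt x) (n : ℤ) :
    IsLatticePt ((n : ℝ) • x) := by
  intro i; obtain ⟨m, hm⟩ := hx i
  exact ⟨n * m, by show (n:ℝ) * x i = _; rw [hm]; push_cast; ring⟩

lemma lat_nsmul' {d : ℕ} {x : Pt d} (hx : IsLatticePt x) (n : ℕ) :
    IsLatticePt ((n : ℝ) • x) := by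
  have := lat_zsmul' hx (n : ℤ)
  rwa [Int.cast_natCast] at this

lemma exists_weights {d n : ℕ} (v : Fin n → Pt d) {p : Pt d}
    (hp : p ∈ convexHull ℝ (Set.range v)) :
    ∃ w : Fin n → ℝ, (∀ i, 0 ≤ w i) ∧ ∑ i, w i = 1 ∧ ∑ i, w i • v i = p := by
  classical
  rw [convexHull_range_eq_exists_affineCombination] at hp
  obtain ⟨s, w, hw0, hw1, hwp⟩ := hp
  refine ⟨fun i => if i ∈ s then w i else 0, fun i => by
    by_cases h : i ∈ s <;> simp [h, hw0 i], ?_, ?_⟩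
  · rw [Finset.sum_ite_mem, Finset.univ_inter, hw1]
  · have h2 : ∀ i : Fin n, (if i ∈ s then w i else 0) • v i = if i ∈ s then w i • v i else 0 :=
      fun i => by by_cases h : i ∈ s <;> simp [h]
    simp only [h2]
    rw [Finset.sum_ite_mem, Finset.univ_inter,
      ← Finset.affineCombination_eq_linear_combination s v w hw1]
    exact hwp

lemma weights_unique {d n : ℕ} {v : Fin n → Pt d} (h : AffineIndependent ℝ v)
    {w w' : Fin n → ℝ} (hw : ∑ i, w i = 1) (hw' : ∑ i, w' i = 1)
    (he : ∑ i, w i • v i = ∑ i, w' i • v i) : w = w' := by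
  funext i
  have key := affineIndependent_iff.mp h Finset.univ (w - w') ?_ ?_ i (Finset.mem_univ i)
  · simpa [sub_eq_zero] using key
  · simp [Finset.sum_sub_distrib, hw, hw']
  · simp [Pi.sub_apply, sub_smul, Finset.sum_sub_distrib, he]

lemma isEdge_of_pair {d n : ℕ} {v : Fin n → Pt d} (hind : AffineIndependent ℝ v)
    {i j : Fin n} (hij : i ≠ j) :
    IsEdge (convexHull ℝ (Set.range v)) (v i) (v j) := by
  classical
  refine ⟨fun h => hij (hind.injective h), ?_, ?_⟩
  · exact (convex_convexHull ℝ _).segment_subset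
      (subset_convexHull _ _ ⟨i, rfl⟩) (subset_convexHull _ _ ⟨j, rfl⟩)
  · rintro x hx y hy q ⟨s, t, hs, ht, hst, hq⟩ ⟨a, b, ha, hb, hab, ho⟩
    obtain ⟨wx, hwx0, hwx1, hwxp⟩ := exists_weights v hx
    obtain ⟨wy, hwy0, hwy1, hwyp⟩ := exists_weights v hy
    set wq : Fin n → ℝ := fun k => a * wx k + b * wy k with hwq
    set wq' : Fin n → ℝ := fun k => (if k = i then s else 0) + (if k = j then t else 0) with hwq'
    have hq1 : ∑ k, wq k = 1 := by
      simp [hwq, Finset.sum_add_distrib, ← Finset.mul_sum, hwx1, hwy1, hab]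
    have hq1' : ∑ k, wq' k = 1 := by
      simp [hwq', Finset.sum_add_distrib, Finset.sum_ite_eq', hst]
    have hqv : ∑ k, wq k • v k = ∑ k, wq' k • v k := by
      have l : ∑ k, wq k • v k = q := by
        simp only [hwq, add_smul, mul_smul, Finset.sum_add_distrib, ← Finset.smul_sum,
          hwxp, hwyp, ho]
      have r : ∑ k, wq' k • v k = q := by
        simp only [hwq', add_smul, ite_smul, zero_smul, Finset.sum_add_distrib,
          Finset.sum_ite_eq', Finset.mem_univ, if_true]
        exact hq
      rw [l, r]
    have heq := weights_unique hind hq1 hq1' hqv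
    have hzero : ∀ k, k ≠ i → k ≠ j → wx k = 0 ∧ wy k = 0 := by
      intro k hki hkj
      have h0 : a * wx k + b * wy k = 0 := by
        have := congrFun heq k
        simpa [hwq, hwq', hki, hkj] using this
      constructor
      · nlinarith [hwx0 k, hwy0 k, mul_nonneg hb.le (hwy0 k), mul_nonneg ha.le (hwx0 k)]
      · nlinarith [hwx0 k, hwy0 k, mul_nonneg hb.le (hwy0 k), mul_nonneg ha.le (hwx0 k)]
    have hsubR : ∀ (f : Fin n → ℝ), (∀ k, k ≠ i → k ≠ j → f k = 0) →
        ∑ k, f k = f i + f j := by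
      intro f hf
      rw [← Finset.sum_pair hij]
      exact (Finset.sum_subset (Finset.subset_univ {i, j}) (by
        intro k _ hk
        simp only [Finset.mem_insert, Finset.mem_singleton, not_or] at hk
        exact hf k hk.1 hk.2)).symm
    have hsubV : ∀ (f : Fin n → Pt d), (∀ k, k ≠ i → k ≠ j → f k = 0) →
        ∑ k, f k = f i + f j := by
      intro f hf
      rw [← Finset.sum_pair hij]
      exact (Finset.sum_subset (Finset.subset_univ {i, j}) (by
        intro k _ hk
        simp only [Finset.mem_insert, Finset.mem_singleton, not_or] at hk
        exact hf k hk.1 hk.2)).symm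
    have hmem : ∀ (w : Fin n → ℝ), (∀ k, 0 ≤ w k) → ∑ k, w k = 1 →
        (∀ k, k ≠ i → k ≠ j → w k = 0) →
        ∑ k, w k • v k ∈ segment ℝ (v i) (v j) := by
      intro w hw0 hw1 hw2
      have hs1 : w i + w j = 1 := by rw [← hw1, hsubR w hw2]
      have hcombo : ∑ k, w k • v k = w i • v i + w j • v j :=
        hsubV (fun k => w k • v k) (fun k h1 h2 => by show w k • v k = 0; rw [hw2 k h1 h2, zero_smul])
      exact ⟨w i, w j, hw0 i, hw0 j, hs1, hcombo.symm⟩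
    rw [← hwxp]
    exact hmem wx hwx0 hwx1 (fun k h1 h2 => (hzero k h1 h2).1)

lemma edge_decomp {d : ℕ} {x y : Pt d} (hx : IsLatticePt x) (hy : IsLatticePt y)
    (hxy : x ≠ y) :
    ∃ g : ℤ, 0 < g ∧ ∃ u : Fin d → ℤ, IsPrimitive u ∧
      ∀ m, y m - x m = (g : ℝ) * (u m : ℝ) := by
  classical
  choose ax hax using hx
  choose ay hay using hy
  set a : Fin d → ℤ := fun m => ay m - ax m with ha
  have hcoord : ∀ m, y m - x m = (a m : ℝ) := by
    intro m; rw [hax, hay, ha]; push_cast; ring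
  have hne : ∃ m, a m ≠ 0 := by
    by_contra hco
    push_neg at hco
    apply hxy
    ext m
    have h1 := hcoord m
    rw [hco m] at h1
    push_cast at h1
    linarith
  obtain ⟨m0, hm0⟩ := hne
  set g : ℤ := Finset.univ.gcd a with hg
  have hgne : g ≠ 0 := fun h => hm0 (Finset.gcd_eq_zero_iff.mp h m0 (Finset.mem_univ m0))
  have hgnn : 0 ≤ g := Int.nonneg_of_normalize_eq_self Finset.normalize_gcd
  have hgpos : 0 < g := lt_of_le_of_ne hgnn (Ne.symm hgne)
  refine ⟨g, hgpos, fun m => a m / g, ?_, ?_⟩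
  · exact Finset.gcd_div_eq_one (Finset.mem_univ m0) hm0
  · intro m
    have hdvd : g ∣ a m := Finset.gcd_dvd (Finset.mem_univ m)
    have h3 : (g : ℤ) * (a m / g) = a m := Int.mul_ediv_cancel' hdvd
    rw [hcoord m, ← h3]
    push_cast
    ring

/-- Theorem 1.3(b). A lattice `d`-simplex all of whose edges have lattice
length at least `d(d+1)` is covered by lattice parallelepipeds; in particular it is
integrally closed. -/
theorem statement2 (d : ℕ) (hd : 0 < d) (v : Fin (d + 1) → Pt d)
    (hind : AffineIndependent ℝ v) (hlat : ∀ i, IsLatticePt (v i))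
    (P : Set (Pt d)) (hP : P = convexHull ℝ (Set.range v))
    (hedges : EdgeLengthsGE P ((d : ℝ) * ((d : ℝ) + 1))) :
    (∀ p ∈ P, ∃ L, IsLatticeParallelepiped L ∧ p ∈ L ∧ L ⊆ P) ∧ IntegrallyClosed P := by
  classical
  have hdR : (0:ℝ) < d := by exact_mod_cast hd
  -- edge information
  have edgeinfo : ∀ i j : Fin (d+1), i ≠ j → ∃ g : ℤ, ((d:ℝ) * ((d:ℝ)+1) ≤ (g:ℝ)) ∧
      ∃ u : Fin d → ℤ, ∀ m, v j m - v i m = (g:ℝ) * (u m : ℝ) := by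
    intro i j hij
    have hvij : v i ≠ v j := fun h => hij (hind.injective h)
    obtain ⟨g, hgpos0, u, hprim, hco⟩ := edge_decomp (hlat i) (hlat j) hvij
    refine ⟨g, ?_, u, hco⟩
    have hedge : IsEdge P (v i) (v j) := hP ▸ isEdge_of_pair hind hij
    exact hedges (v i) (v j) hedge u (g:ℝ) (by exact_mod_cast hgpos0) hprim (fun m => hco m)
  choose gi hgi ui hui using edgeinfo
  have hgpos : ∀ i j (h : i ≠ j), (0:ℝ) < (gi i j h : ℝ) := by
    intro i j h
    have hd1 : (1:ℝ) ≤ (d:ℝ) := by exact_mod_cast hd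
    have h2 : (2:ℝ) ≤ (d:ℝ) * ((d:ℝ)+1) := by nlinarith [hd1]
    linarith [hgi i j h]
  -- the covering statement
  have hcov : ∀ p ∈ P, ∃ L, IsLatticeParallelepiped L ∧ p ∈ L ∧ L ⊆ P := by
    intro p hp
    rw [hP] at hp
    obtain ⟨w, hw0, hw1, hwp⟩ := exists_weights v hp
    obtain ⟨i0, -, hmax⟩ := Finset.exists_max_image Finset.univ w Finset.univ_nonempty
    have hwi0 : ((d:ℝ)+1)⁻¹ ≤ w i0 := by
      have hsle : (1:ℝ) ≤ ((d:ℝ)+1) * w i0 := by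
        calc (1:ℝ) = ∑ i, w i := hw1.symm
          _ ≤ ∑ _i : Fin (d+1), w i0 :=
              Finset.sum_le_sum (fun i _ => hmax i (Finset.mem_univ i))
          _ = ((d:ℝ)+1) * w i0 := by
              simp only [Finset.sum_const, Finset.card_univ, Fintype.card_fin, nsmul_eq_mul]
              push_cast; ring
      rw [inv_eq_one_div, div_le_iff₀ (by positivity)]
      nlinarith [hsle]
    set J : Fin d → Fin (d+1) := fun k => i0.succAbove k with hJ
    have hJne : ∀ k, i0 ≠ J k := fun k => (Fin.succAbove_ne i0 k).symm
    set G : Fin d → ℝ := fun k => (gi i0 (J k) (hJne k) : ℝ) with hG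
    set U : Fin d → Pt d := fun k => WithLp.toLp 2 (fun m => (ui i0 (J k) (hJne k) m : ℝ)) with hU
    have hUlat : ∀ k, IsLatticePt (U k) := fun k m => ⟨ui i0 (J k) (hJne k) m, rfl⟩
    have hGpos : ∀ k, 0 < G k := fun k => hgpos _ _ _
    have hGge : ∀ k, (d:ℝ) * ((d:ℝ)+1) ≤ G k := fun k => hgi _ _ _
    have hvec : ∀ k, v (J k) - v i0 = G k • U k := by
      intro k; ext m
      show v (J k) m - v i0 m = G k * U k m
      exact hui i0 (J k) (hJne k) m
    set μ : Fin d → ℝ := fun k => w (J k) * G k with hμ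
    have hμnn : ∀ k, 0 ≤ μ k := fun k => mul_nonneg (hw0 _) (hGpos k).le
    set N : Fin d → ℕ := fun k => ⌊μ k⌋₊ with hN
    have hNle : ∀ k, (N k : ℝ) ≤ μ k := fun k => Nat.floor_le (hμnn k)
    have hlt : ∀ k, μ k < N k + 1 := fun k => Nat.lt_floor_add_one (μ k)
    set z : Pt d := v i0 + ∑ k, (N k : ℝ) • U k with hzdef
    have hpv : p - v i0 = ∑ k, μ k • U k := by
      have e1 : p - v i0 = ∑ j, w j • (v j - v i0) := by
        simp only [smul_sub, Finset.sum_sub_distrib, ← Finset.sum_smul, hw1, one_smul, hwp]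
      rw [e1, Fin.sum_univ_succAbove (fun j => w j • (v j - v i0)) i0]
      simp only [sub_self, smul_zero, zero_add]
      refine Finset.sum_congr rfl (fun k _ => ?_)
      show w (J k) • (v (J k) - v i0) = _
      simp only [hvec k, smul_smul, hμ]
    refine ⟨Parallelepiped z U, ⟨z, U, ?_, hUlat, ?_, rfl⟩, ?_, ?_⟩
    · -- z is a lattice point
      exact lat_add' (hlat i0) (lat_sum' _ _ (fun k _ => lat_nsmul' (hUlat k) (N k)))
    · -- linear independence
      have h1 := (affineIndependent_iff_linearIndependent_vsub ℝ v i0).mp hind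
      have hinj : Function.Injective
          (fun k : Fin d => (⟨J k, Fin.succAbove_ne i0 k⟩ : {x : Fin (d+1) // x ≠ i0})) := by
        intro k1 k2 h
        exact Fin.succAbove_right_injective (congrArg Subtype.val h)
      have h2 := h1.comp _ hinj
      have h3 : LinearIndependent ℝ (fun k => v (J k) - v i0) := h2
      have hUrep : U = (fun k => Units.mk0 (G k)⁻¹ (inv_ne_zero (hGpos k).ne')) •
          (fun k => v (J k) - v i0) := by
        funext k
        show U k = (G k)⁻¹ • (v (J k) - v i0)
        rw [hvec k, inv_smul_smul₀ (hGpos k).ne']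
      rw [hUrep]
      exact h3.units_smul _
    · -- p belongs to the parallelepiped
      refine ⟨fun k => μ k - N k, fun k =>
        ⟨(by linarith [hNle k] : (0:ℝ) ≤ μ k - N k),
         (by linarith [hlt k] : μ k - (N k:ℝ) ≤ 1)⟩, ?_⟩
      have : p = v i0 + (p - v i0) := by abel
      rw [this, hpv, hzdef]
      rw [show (∑ k, μ k • U k) = ∑ k, ((N k : ℝ) • U k + (μ k - N k) • U k) from
        Finset.sum_congr rfl (fun k _ => by module)]
      rw [Finset.sum_add_distrib]
      abel
    · -- the parallelepiped is contained in P
      rintro q ⟨lam, hlam, rfl⟩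
      set b : Fin d → ℝ := fun k => ((N k : ℝ) + lam k) / G k with hb
      have hbnn : ∀ k, 0 ≤ b k := fun k =>
        div_nonneg (add_nonneg (Nat.cast_nonneg _) (hlam k).1) (hGpos k).le
      have hble : ∀ k, b k ≤ w (J k) + 1 / G k := by
        intro k
        have h1 : (N k : ℝ) + lam k ≤ μ k + 1 := by
          linarith [hNle k, (hlam k).2]
        have h2 : b k ≤ (μ k + 1) / G k := by
          show ((N k : ℝ) + lam k) / G k ≤ (μ k + 1) / G k
          exact div_le_div_of_nonneg_right h1 (hGpos k).le
        have h3 : (μ k + 1) / G k = w (J k) + 1 / G k := by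
          show (w (J k) * G k + 1) / G k = w (J k) + 1 / G k
          have hGk : G k ≠ 0 := (hGpos k).ne'
          field_simp
        rw [← h3]; exact h2
      have hGinv : ∀ k, 1 / G k ≤ 1 / ((d:ℝ) * ((d:ℝ)+1)) := fun k =>
        one_div_le_one_div_of_le (by positivity) (hGge k)
      have hwsum : ∑ k, w (J k) = 1 - w i0 := by
        have h4 := Fin.sum_univ_succAbove w i0
        rw [hw1] at h4
        linarith [h4]
      have hbsum : ∑ k, b k ≤ 1 := by
        have hstep : ∑ k, b k ≤ (1 - w i0) + ∑ k : Fin d, 1 / G k := by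
          calc ∑ k, b k ≤ ∑ k, (w (J k) + 1/G k) := Finset.sum_le_sum (fun k _ => hble k)
            _ = (1 - w i0) + ∑ k : Fin d, 1/G k := by
                rw [Finset.sum_add_distrib, hwsum]
        have hstep2 : ∑ k : Fin d, 1 / G k ≤ ((d:ℝ)+1)⁻¹ := by
          calc ∑ k : Fin d, 1/G k ≤ ∑ _k : Fin d, 1/((d:ℝ)*((d:ℝ)+1)) :=
                Finset.sum_le_sum (fun k _ => hGinv k)
            _ = (d:ℝ) * (1/((d:ℝ)*((d:ℝ)+1))) := by
                simp only [Finset.sum_const, Finset.card_univ, Fintype.card_fin, nsmul_eq_mul]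
            _ = ((d:ℝ)+1)⁻¹ := by
                rw [inv_eq_one_div]
                field_simp
        linarith [hwi0]
      rw [hP]
      refine mem_convexHull_of_exists_fintype (ι := Option (Fin d))
        (fun o => Option.elim o (1 - ∑ k, b k) b)
        (fun o => Option.elim o (v i0) (fun k => v (J k))) ?_ ?_ ?_ ?_
      · rintro (_|k)
        · simpa using (by linarith [hbsum] : 0 ≤ 1 - ∑ k, b k)
        · exact hbnn k
      · rw [Fintype.sum_option]
        simp only [Option.elim]
        ring
      · rintro (_|k)
        exacts [⟨i0, rfl⟩, ⟨J k, rfl⟩]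
      · rw [Fintype.sum_option]
        simp only [Option.elim]
        have hbk : ∀ k, b k • v (J k) = b k • v i0 + ((N k:ℝ) + lam k) • U k := by
          intro k
          have hv : v (J k) = v i0 + G k • U k := by rw [← hvec k]; abel
          rw [hv, smul_add, smul_smul]
          congr 2
          show ((N k : ℝ) + lam k) / G k * G k = (N k : ℝ) + lam k
          have hGk : G k ≠ 0 := (hGpos k).ne'
          field_simp
        rw [Finset.sum_congr rfl (fun k _ => hbk k), Finset.sum_add_distrib, ← Finset.sum_smul]
        rw [hzdef]
        rw [show (∑ k, ((N k:ℝ) + lam k) • U k) = ∑ k, ((N k:ℝ) • U k + lam k • U k) from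
          Finset.sum_congr rfl (fun k _ => add_smul _ _ _), Finset.sum_add_distrib]
        rw [sub_smul, one_smul]
        abel
  refine ⟨hcov, ?_⟩
  -- integrally closed
  intro c hc zz hzz hzlat
  rw [Set.mem_smul_set] at hzz
  obtain ⟨p, hp, hpz⟩ := hzz
  obtain ⟨L, ⟨z0, U, hz0lat, hUlat, -, rfl⟩, hpL, hLP⟩ := hcov p hp
  obtain ⟨lam, hlam, hplam⟩ := hpL
  set γ : Fin d → ℝ := fun k => (c:ℝ) * lam k with hγ
  have hγ0 : ∀ k, 0 ≤ γ k := fun k => mul_nonneg (by positivity) (hlam k).1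
  have hγc : ∀ k, γ k ≤ c := by
    intro k
    calc (c:ℝ) * lam k ≤ (c:ℝ) * 1 :=
          mul_le_mul_of_nonneg_left (hlam k).2 (by positivity)
      _ = c := mul_one _
  set m : Fin d → ℕ := fun k => min ⌊γ k⌋₊ (c-1) with hm
  have hmc : ∀ k, m k ≤ c - 1 := fun k => min_le_right _ _
  have hmγ : ∀ k, (m k : ℝ) ≤ γ k := by
    intro k
    have h1 : (m k : ℝ) ≤ (⌊γ k⌋₊ : ℝ) := by exact_mod_cast min_le_left _ _
    exact le_trans h1 (Nat.floor_le (hγ0 k))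
  have hfrac : ∀ k, γ k - m k ≤ 1 := by
    intro k
    by_cases hcase : ⌊γ k⌋₊ ≤ c - 1
    · have he1 : m k = ⌊γ k⌋₊ := min_eq_left hcase
      rw [he1]
      linarith [Nat.lt_floor_add_one (γ k)]
    · push_neg at hcase
      have he1 : m k = c - 1 := min_eq_right (le_of_lt hcase)
      rw [he1]
      have h1 : ((c - 1 : ℕ) : ℝ) = (c : ℝ) - 1 := by
        have : (1:ℕ) ≤ c := hc
        push_cast [Nat.cast_sub this]
        ring
      rw [h1]
      linarith [hγc k]
  set e : Fin c → Fin d → ℝ :=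
    fun j k => if (j:ℕ) = c - 1 then γ k - m k else if (j:ℕ) < m k then 1 else 0 with he
  have hex : ∀ j k, 0 ≤ e j k ∧ e j k ≤ 1 := by
    intro j k
    rw [he]
    simp only []
    split_ifs with h1 h2
    · exact ⟨by linarith [hmγ k], hfrac k⟩
    · norm_num
    · norm_num
  set x : Fin c → Pt d := fun j => z0 + ∑ k, e j k • U k with hx
  have hxL : ∀ j, x j ∈ Parallelepiped z0 U :=
    fun j => ⟨e j, fun k => ⟨(hex j k).1, (hex j k).2⟩, rfl⟩
  have hesum : ∀ k, ∑ j : Fin c, e j k = γ k := by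
    intro k
    have hF : ∀ j : Fin c, e j k =
        (fun jn : ℕ => if jn = c - 1 then γ k - m k else if jn < m k then 1 else 0) (j:ℕ) := by
      intro j; rw [he]
    rw [Finset.sum_congr rfl (fun j _ => hF j)]
    rw [Fin.sum_univ_eq_sum_range
      (fun jn : ℕ => if jn = c - 1 then γ k - m k else if jn < m k then 1 else 0) c]
    obtain ⟨c', rfl⟩ : ∃ c', c = c' + 1 := ⟨c - 1, (Nat.succ_pred_eq_of_pos hc).symm⟩
    rw [Finset.sum_range_succ]
    have hc' : c' + 1 - 1 = c' := rfl
    rw [hc']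
    simp only [if_pos rfl]
    have hind2 : ∀ jn ∈ Finset.range c', (if jn = c' then γ k - (m k : ℝ) else
        if jn < m k then (1:ℝ) else 0) = if jn < m k then (1:ℝ) else 0 := by
      intro jn hjn
      rw [Finset.mem_range] at hjn
      rw [if_neg (by omega)]
    rw [Finset.sum_congr rfl hind2]
    rw [Finset.sum_boole]
    have hfilter : Finset.filter (fun jn => jn < m k) (Finset.range c') = Finset.range (m k) := by
      ext jn
      simp only [Finset.mem_filter, Finset.mem_range]
      have := hmc k
      omega
    rw [hfilter, Finset.card_range]
    simp only [if_true]
    ring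
  have hUtot : p - z0 = ∑ k, lam k • U k := by rw [hplam]; abel
  have hsumx : ∑ j, x j = zz := by
    rw [hx]
    simp only []
    rw [Finset.sum_add_distrib, Finset.sum_const, Finset.card_univ, Fintype.card_fin]
    rw [Finset.sum_comm]
    have hcol : ∀ k, ∑ j : Fin c, e j k • U k = γ k • U k := by
      intro k; rw [← Finset.sum_smul, hesum k]
    rw [Finset.sum_congr rfl (fun k _ => hcol k)]
    have h1 : ∑ k, γ k • U k = (c:ℝ) • (p - z0) := by
      rw [hUtot, Finset.smul_sum]
      exact Finset.sum_congr rfl (fun k _ => by rw [hγ]; simp only []; rw [smul_smul])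
    rw [h1, ← Nat.cast_smul_eq_nsmul ℝ c z0, ← hpz, smul_sub]
    abel
  have hlatx : ∀ j : Fin c, (j:ℕ) ≠ c - 1 → IsLatticePt (x j) := by
    intro j hj
    apply lat_add' hz0lat
    apply lat_sum'
    intro k _
    by_cases h2 : (j:ℕ) < m k
    · have hee : e j k = 1 := by rw [he]; simp [hj, h2]
      rw [hee, one_smul]; exact hUlat k
    · have hee : e j k = 0 := by rw [he]; simp [hj, h2]
      rw [hee, zero_smul]; exact lat_zero'
  have hclt : c - 1 < c := by omega
  set jl : Fin c := ⟨c - 1, hclt⟩ with hjl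
  have hxjl : x jl = zz - ∑ j ∈ Finset.univ.erase jl, x j := by
    rw [← hsumx, ← Finset.add_sum_erase Finset.univ x (Finset.mem_univ jl)]
    abel
  have hlatjl : IsLatticePt (x jl) := by
    rw [hxjl]
    apply lat_sub' hzlat
    apply lat_sum'
    intro j hj
    apply hlatx
    intro hcon
    exact Finset.ne_of_mem_erase hj (Fin.ext hcon)
  refine ⟨x, fun j => ⟨hLP (hxL j), ?_⟩, hsumx⟩
  by_cases hj : (j:ℕ) = c - 1
  · have hjj : j = jl := Fin.ext hj
    rw [hjj]; exact hlatjl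
  · exact hlatx j hj
end
end

section
/- Let d be a positive integer, let P ⊂ ℝ^d be a rational polytope of dimension d, and let c ∈ ℚ with c ≥ d+1. Then cP = ⋃_{v ∈ vert(P)} (v + (c−1)P), the union over all vertices v of P. -/
open Set Metric Pointwise

noncomputable section

/-- Lemma 2.1. For a rational `d`-polytope `P` and rational `c ≥ d+1`,
`cP = ⋃_{v ∈ vert(P)} (v + (c-1)P)`. -/
theorem statement3 (d : ℕ) (hd : 0 < d)
    (P : Set (Pt d)) (hP : IsRationalPolytope P) (hdim : polyDim P = d)
    (c : ℚ) (hc : (d : ℚ) + 1 ≤ c) :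
    (c : ℝ) • P =
      {y | ∃ v ∈ Set.extremePoints ℝ P, ∃ p ∈ ((c : ℝ) - 1) • P, y = v + p} := by
  classical
  obtain ⟨V, hVrat, hPV⟩ := hP
  have hPconv : Convex ℝ P := hPV ▸ convex_convexHull ℝ _
  have hdc : (d : ℝ) + 1 ≤ (c : ℝ) := by exact_mod_cast hc
  have hd1 : (1 : ℝ) ≤ (d : ℝ) := by exact_mod_cast hd
  have hc0 : (0 : ℝ) < (c : ℝ) := by linarith
  have hcm1 : (0 : ℝ) < (c : ℝ) - 1 := by linarith
  have hcm1' : ((c : ℝ) - 1) ≠ 0 := ne_of_gt hcm1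
  ext y
  constructor
  · rintro ⟨x, hxP, rfl⟩
    have hEsub : Set.extremePoints ℝ P ⊆ (V : Set (Pt d)) :=
      hPV ▸ extremePoints_convexHull_subset
    have hEfin : (Set.extremePoints ℝ P).Finite := V.finite_toSet.subset hEsub
    have hcomp : IsCompact P := hPV ▸ (V.finite_toSet.isCompact_convexHull ℝ)
    have hPE : P = convexHull ℝ (Set.extremePoints ℝ P) := by
      conv_lhs => rw [← closure_convexHull_extremePoints hcomp hPconv]
      exact (hEfin.isCompact_convexHull ℝ).isClosed.closure_eq
    rw [hPE, convexHull_eq_union] at hxP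
    simp only [Set.mem_iUnion] at hxP
    obtain ⟨t, hts, hai, hxt⟩ := hxP
    have htP : ∀ z ∈ t, z ∈ P := fun z hz => (hts hz).1
    have hcard : (t.card : ℝ) ≤ (c : ℝ) := by
      have h1 : Fintype.card t ≤ Module.finrank ℝ (vectorSpan ℝ (Set.range ((↑) : t → Pt d))) + 1 :=
        hai.card_le_finrank_succ
      have h2 : Module.finrank ℝ (vectorSpan ℝ (Set.range ((↑) : t → Pt d))) ≤ d := by
        have := Submodule.finrank_le (vectorSpan ℝ (Set.range ((↑) : t → Pt d)))
        simpa [finrank_euclideanSpace] using this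
      have : t.card ≤ d + 1 := by
        rw [← Fintype.card_coe]
        omega
      have : (t.card : ℝ) ≤ (d : ℝ) + 1 := by exact_mod_cast this
      linarith
    rw [Finset.convexHull_eq] at hxt
    obtain ⟨w, hw0, hw1, hxc⟩ := hxt
    have hxrep : x = ∑ z ∈ t, w z • z := by
      rw [← hxc, Finset.centerMass_eq_of_sum_1 _ _ hw1]
      simp
    have ht : t.Nonempty := Finset.nonempty_of_ne_empty (by rintro rfl; simp at hw1)
    obtain ⟨v, hvt, hvmax⟩ := t.exists_max_image w ht
    have hwv0 : 0 ≤ w v := hw0 v hvt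
    have hwv : 1 ≤ (c : ℝ) * w v := by
      have hs : ∑ z ∈ t, w z ≤ t.card • w v := Finset.sum_le_card_nsmul t w (w v) hvmax
      rw [hw1, nsmul_eq_mul] at hs
      nlinarith
    set w' : Pt d → ℝ := fun z => ((c : ℝ) - 1)⁻¹ * ((c : ℝ) * w z - if z = v then 1 else 0)
      with hw'def
    have hw'0 : ∀ z ∈ t, 0 ≤ w' z := by
      intro z hz
      apply mul_nonneg (by positivity)
      by_cases h : z = v
      · subst h; rw [if_pos rfl]; linarith
      · simp only [if_neg h]
        have := hw0 z hz
        nlinarith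
    have hw'1 : ∑ z ∈ t, w' z = 1 := by
      rw [hw'def, ← Finset.mul_sum, Finset.sum_sub_distrib, ← Finset.mul_sum, hw1,
        Finset.sum_ite_eq' t v (fun _ => (1 : ℝ)), if_pos hvt, mul_one]
      field_simp
    have hq : ∑ z ∈ t, w' z • z = ((c : ℝ) - 1)⁻¹ • ((c : ℝ) • x - v) := by
      have hv' : v = ∑ z ∈ t, (if z = v then z else 0) := by
        rw [Finset.sum_ite_eq' t v (fun z => z), if_pos hvt]
      rw [hxrep, Finset.smul_sum]
      conv_rhs => rw [hv']
      rw [← Finset.sum_sub_distrib, Finset.smul_sum]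
      refine Finset.sum_congr rfl fun z hz => ?_
      by_cases h : z = v <;>
        simp [hw'def, h, sub_smul, smul_smul, smul_sub, sub_mul, one_mul, mul_comm]
    refine ⟨v, hts hvt, ((c : ℝ) - 1) • (((c : ℝ) - 1)⁻¹ • ((c : ℝ) • x - v)), ?_, ?_⟩
    · refine Set.smul_mem_smul_set ?_
      rw [← hq]
      exact hPconv.sum_mem hw'0 hw'1 fun z hz => (hts hz).1
    · rw [smul_inv_smul₀ hcm1', add_sub_cancel]
  · rintro ⟨v, hv, p, hp, rfl⟩
    obtain ⟨p', hp'P, rfl⟩ := hp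
    refine ⟨(c : ℝ)⁻¹ • v + (1 - (c : ℝ)⁻¹) • p', ?_, ?_⟩
    · refine hPconv hv.1 hp'P (by positivity) ?_ (by ring)
      have : (c : ℝ)⁻¹ ≤ 1 := by
        rw [inv_le_one_iff₀]; right; linarith
      linarith
    · show (c : ℝ) • ((c : ℝ)⁻¹ • v + (1 - (c : ℝ)⁻¹) • p') = v + ((c : ℝ) - 1) • p'
      rw [smul_add, smul_smul, smul_smul, mul_inv_cancel₀ (ne_of_gt hc0), one_smul]
      have h : (c : ℝ) * (1 - (c : ℝ)⁻¹) = (c : ℝ) - 1 := by field_simp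
      rw [h]
end
end

section
/- Let d be a positive integer and let P ⊂ ℝ^d be a lattice polytope of dimension d. If P is (d+1)-convex-normal, then P is integrally closed. -/
open Set Metric Pointwise

noncomputable section

-- auxiliary lemmas

lemma my_sum_coord {d n : ℕ} (f : Fin n → Pt d) (j : Fin d) : (∑ i, f i) j = ∑ i, f i j := by
  induction n with
  | zero => simp
  | succ k ih => rw [Fin.sum_univ_succ, Fin.sum_univ_succ, PiLp.add_apply, ih]

lemma my_int_decomp (na nb : ℤ) (hab : na ≤ nb) :
    ∀ (c : ℕ) (N : ℤ), (c : ℤ) * na ≤ N → N ≤ (c : ℤ) * nb →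
    ∃ s : Fin c → ℤ, (∀ i, na ≤ s i ∧ s i ≤ nb) ∧ ∑ i, s i = N := by
  intro c
  induction c with
  | zero =>
    intro N h1 h2
    refine ⟨fun _ => 0, by simp, ?_⟩
    simp at h1 h2 ⊢
    omega
  | succ k ih =>
    intro N h1 h2
    have hAB : (k : ℤ) * na ≤ (k : ℤ) * nb := by
      apply mul_le_mul_of_nonneg_left hab (by positivity)
    have h1' : (k : ℤ) * na + na ≤ N := by push_cast at h1; linarith
    have h2' : N ≤ (k : ℤ) * nb + nb := by push_cast at h2; linarith
    set s0 : ℤ := max na (min nb (N - k * na)) with hs0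
    obtain ⟨s, hs, hsum⟩ := ih (N - s0) (by omega) (by omega)
    refine ⟨Fin.cons s0 s, ?_, ?_⟩
    · intro i
      refine Fin.cases ?_ ?_ i
      · constructor
        · exact le_max_left _ _
        · simp [hs0]; omega
      · intro j; simpa using hs j
    · rw [Fin.sum_cons, hsum]; ring

lemma my_m_facts (d c : ℕ) (hd : 2 ≤ d) (hc : 2 ≤ c) :
    ∃ m, 0 < m ∧ 2 * m ≤ c ∧ c ≤ m * (d + 1) := by
  rcases le_or_gt c (d + 1) with hle | hlt
  · exact ⟨1, by omega, by omega, by omega⟩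
  · refine ⟨(c + d) / (d + 1), ?_, ?_, ?_⟩
    · exact Nat.div_pos (by omega) (by omega)
    · -- 2 * ((c+d)/(d+1)) ≤ c
      have h1 : (c + d) / (d + 1) * (d + 1) ≤ c + d := Nat.div_mul_le_self _ _
      have h2 : 2 * (c + d) ≤ c * (d + 1) := by nlinarith
      have h3 : 2 * ((c + d) / (d + 1)) * (d + 1) ≤ c * (d + 1) := by
        calc 2 * ((c + d) / (d + 1)) * (d + 1) = 2 * ((c + d) / (d + 1) * (d + 1)) := by ring
        _ ≤ 2 * (c + d) := by omega
        _ ≤ c * (d + 1) := h2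
      exact Nat.le_of_mul_le_mul_right h3 (by omega)
    · -- c ≤ ((c+d)/(d+1)) * (d+1)
      have h1 := Nat.div_add_mod (c + d) (d + 1)
      have h2 : (c + d) % (d + 1) < d + 1 := Nat.mod_lt _ (by omega)
      have hcomm : (d + 1) * ((c + d) / (d + 1)) = ((c + d) / (d + 1)) * (d + 1) :=
        mul_comm _ _
      rw [hcomm] at h1
      obtain ⟨X, hX⟩ : ∃ X, ((c + d) / (d + 1)) * (d + 1) = X := ⟨_, rfl⟩
      rw [hX] at h1 ⊢
      omega

lemma my_vertex_lattice {d : ℕ} {P : Set (Pt d)} (hP : IsLatticePolytope P)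
    {v : Pt d} (hv : v ∈ Set.extremePoints ℝ P) : IsLatticePt v := by
  obtain ⟨V, hVl, hPV⟩ := hP
  rw [hPV] at hv
  exact hVl v (extremePoints_convexHull_subset hv)

lemma my_cn_step {d : ℕ} {P : Set (Pt d)} (hP : IsLatticePolytope P)
    (hcn : ConvexNormal ((d : ℚ) + 1) P) (c m : ℕ) (hm : 0 < m)
    (h2 : 2 * m ≤ c) (hk : c ≤ m * (d + 1))
    {z : Pt d} (hz : z ∈ (c : ℝ) • P) (hzl : IsLatticePt z) :
    ∃ y : Pt d, y ∈ (((c - m : ℕ)) : ℝ) • P ∧ IsLatticePt y ∧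
      (z - y) ∈ (m : ℝ) • P ∧ IsLatticePt (z - y) := by
  have hmc : m ≤ c := by omega
  have hm0 : (m : ℝ) ≠ 0 := by positivity
  have hmq0 : (m : ℚ) ≠ 0 := by positivity
  set cq : ℚ := (c : ℚ) / m with hcq
  have h2q : 2 ≤ cq := by
    rw [hcq, le_div_iff₀ (by positivity)]
    exact_mod_cast h2
  have hkq : cq ≤ (d : ℚ) + 1 := by
    rw [hcq, div_le_iff₀ (by positivity)]
    calc (c : ℚ) ≤ (m : ℚ) * ((d : ℚ) + 1) := by exact_mod_cast hk
    _ = ((d : ℚ) + 1) * m := by ring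
  have hcr : ((cq : ℝ)) * m = c := by
    rw [hcq]
    push_cast
    field_simp
  have hmem : (m : ℝ)⁻¹ • z ∈ (cq : ℝ) • P := by
    have hsplit : ((c : ℝ)) • P = (m : ℝ) • ((cq : ℝ) • P) := by
      rw [smul_smul, mul_comm, hcr]
    rw [hsplit] at hz
    exact (mem_smul_set_iff_inv_smul_mem₀ hm0 _ _).1 hz
  rw [hcn cq h2q hkq] at hmem
  obtain ⟨v, hv, x, hx, hlat, p, hp, heq⟩ := hmem
  have hvl : IsLatticePt v := my_vertex_lattice hP hv
  have hkey : (m : ℝ) * ((cq : ℝ) - 1) = (c : ℝ) - m := by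
    rw [mul_sub, mul_comm, hcr]; ring
  refine ⟨(m : ℝ) • x, ?_, ?_, ?_, ?_⟩
  · have hcast : (((c - m : ℕ)) : ℝ) = (m : ℝ) * ((cq : ℝ) - 1) := by
      rw [hkey]; push_cast [Nat.cast_sub hmc]; ring
    rw [hcast, mul_smul]
    exact smul_mem_smul_set hx
  · intro i
    obtain ⟨n, hn⟩ := hlat i
    obtain ⟨kk, hkk⟩ := hvl i
    refine ⟨m * n + ((c : ℤ) - m) * kk, ?_⟩
    have hxi : x i - ((cq : ℝ) - 1) * v i = (n : ℝ) := by
      rw [← hn]; simp [PiLp.sub_apply, PiLp.smul_apply, smul_eq_mul]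
    have : ((m : ℝ) • x) i = (m : ℝ) * x i := by simp [PiLp.smul_apply, smul_eq_mul]
    rw [this]
    have hx2 : x i = (n : ℝ) + ((cq : ℝ) - 1) * kk := by rw [hkk] at hxi; linarith
    rw [hx2]
    push_cast
    linear_combination (kk : ℝ) * hkey
  · have hzeq : z = (m : ℝ) • x + (m : ℝ) • p := by
      have h3 : (m : ℝ) • ((m : ℝ)⁻¹ • z) = (m : ℝ) • (x + p) := by rw [heq]
      rw [smul_inv_smul₀ hm0, smul_add] at h3
      exact h3
    have : z - (m : ℝ) • x = (m : ℝ) • p := by rw [hzeq]; abel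
    rw [this]
    exact smul_mem_smul_set hp
  · intro i
    obtain ⟨a, ha⟩ := hzl i
    obtain ⟨n, hn⟩ := hlat i
    obtain ⟨kk, hkk⟩ := hvl i
    refine ⟨a - (m * n + ((c : ℤ) - m) * kk), ?_⟩
    have hxi : x i - ((cq : ℝ) - 1) * v i = (n : ℝ) := by
      rw [← hn]; simp [PiLp.sub_apply, PiLp.smul_apply, smul_eq_mul]
    have hx2 : x i = (n : ℝ) + ((cq : ℝ) - 1) * kk := by rw [hkk] at hxi; linarith
    have : (z - (m : ℝ) • x) i = z i - (m : ℝ) * x i := by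
      simp [PiLp.sub_apply, PiLp.smul_apply, smul_eq_mul]
    rw [this, ha, hx2]
    push_cast
    linear_combination (-(kk : ℝ)) * hkey

lemma my_oneD {P : Set (Pt 1)} (hP : IsLatticePolytope P) : IntegrallyClosed P := by
  obtain ⟨V, hVl, hPV⟩ := hP
  intro c hc z hz hzl
  rw [Set.mem_smul_set] at hz
  obtain ⟨p, hp, hzp⟩ := hz
  have hVne : V.Nonempty := by
    have : (V : Set (Pt 1)).Nonempty := by
      rw [← convexHull_nonempty_iff (𝕜 := ℝ), ← hPV]; exact ⟨p, hp⟩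
    exact this
  obtain ⟨va, hvaV, hva⟩ := V.exists_min_image (fun w => w 0) hVne
  obtain ⟨vb, hvbV, hvb⟩ := V.exists_max_image (fun w => w 0) hVne
  obtain ⟨na, hna⟩ := hVl va hvaV 0
  obtain ⟨nb, hnb⟩ := hVl vb hvbV 0
  have hvavb : va 0 ≤ vb 0 := hva vb hvbV
  have hab : na ≤ nb := by
    rw [hna, hnb] at hvavb; exact Int.cast_le.mp hvavb
  have hbound : ∀ x ∈ P, (na : ℝ) ≤ x 0 ∧ x 0 ≤ (nb : ℝ) := by
    intro x hx
    rw [hPV] at hx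
    have hlin : IsLinearMap ℝ (fun x : Pt 1 => x 0) := ⟨fun _ _ => rfl, fun _ _ => rfl⟩
    have hsub : convexHull ℝ (V : Set (Pt 1)) ⊆
        {x : Pt 1 | (na : ℝ) ≤ x 0} ∩ {x : Pt 1 | x 0 ≤ (nb : ℝ)} := by
      apply convexHull_min
      · intro w hw
        refine ⟨?_, ?_⟩
        · rw [← hna]; exact hva w hw
        · rw [← hnb]; exact hvb w hw
      · exact (convex_halfSpace_ge hlin (na : ℝ)).inter (convex_halfSpace_le hlin (nb : ℝ))
    exact hsub hx
  have hseg : ∀ n : ℤ, na ≤ n → n ≤ nb → ∃ w, w ∈ P ∧ IsLatticePt w ∧ w 0 = (n : ℝ) := by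
    intro n h1 h2
    rcases eq_or_lt_of_le hvavb with heq | hlt
    · have hnanb : na = nb := by
        rw [hna, hnb] at heq; exact Int.cast_inj.mp heq
      have hn : n = na := by omega
      refine ⟨va, ?_, hVl va hvaV, by rw [hna, hn]⟩
      rw [hPV]; exact subset_convexHull ℝ _ hvaV
    · have hdlt : (0 : ℝ) < (nb : ℝ) - na := by
        rw [hna, hnb] at hlt; linarith
      set t : ℝ := ((n : ℝ) - na) / ((nb : ℝ) - na) with ht
      have hn1 : (na : ℝ) ≤ (n : ℝ) := by exact_mod_cast h1
      have hn2 : (n : ℝ) ≤ (nb : ℝ) := by exact_mod_cast h2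
      have ht0 : 0 ≤ t := div_nonneg (by linarith) (by linarith)
      have ht1 : t ≤ 1 := by rw [div_le_one hdlt]; linarith
      have hval : ((1 - t) • va + t • vb) 0 = (n : ℝ) := by
        have hexp : ((1 - t) • va + t • vb) 0 = (1 - t) * va 0 + t * vb 0 := by
          simp [PiLp.add_apply, PiLp.smul_apply, smul_eq_mul]
        rw [hexp, hna, hnb, ht]
        field_simp
        ring
      refine ⟨(1 - t) • va + t • vb, ?_, ?_, hval⟩
      · rw [hPV]
        exact (convex_convexHull ℝ (V : Set (Pt 1))) (subset_convexHull ℝ _ hvaV)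
          (subset_convexHull ℝ _ hvbV) (by linarith) ht0 (by ring)
      · intro j
        have hj : j = 0 := Subsingleton.elim _ _
        rw [hj, hval]
        exact ⟨n, rfl⟩
  obtain ⟨N, hN⟩ := hzl 0
  have hz0 : (N : ℝ) = (c : ℝ) * p 0 := by
    rw [← hN, ← hzp]; simp [PiLp.smul_apply, smul_eq_mul]
  have hpb := hbound p hp
  have hcr0 : (0 : ℝ) ≤ (c : ℝ) := by positivity
  have hNlb : (c : ℤ) * na ≤ N := by
    have : (c : ℝ) * (na : ℝ) ≤ (N : ℝ) := by
      rw [hz0]; exact mul_le_mul_of_nonneg_left hpb.1 hcr0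
    exact_mod_cast this
  have hNub : N ≤ (c : ℤ) * nb := by
    have : (N : ℝ) ≤ (c : ℝ) * (nb : ℝ) := by
      rw [hz0]; exact mul_le_mul_of_nonneg_left hpb.2 hcr0
    exact_mod_cast this
  obtain ⟨s, hsb, hsum⟩ := my_int_decomp na nb hab c N hNlb hNub
  choose w hw using fun i => hseg (s i) (hsb i).1 (hsb i).2
  refine ⟨w, fun i => ⟨(hw i).1, (hw i).2.1⟩, ?_⟩
  ext j
  have hj : j = 0 := Subsingleton.elim _ _
  rw [hj, my_sum_coord, hN]
  calc ∑ i, w i 0 = ∑ i, ((s i : ℤ) : ℝ) := by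
        exact Finset.sum_congr rfl fun i _ => (hw i).2.2
  _ = ((∑ i, s i : ℤ) : ℝ) := by push_cast; rfl
  _ = (N : ℝ) := by rw [hsum]

/-- Lemma 2.4(a). A `(d+1)`-convex-normal lattice `d`-polytope is
integrally closed. -/
theorem statement4 (d : ℕ) (hd : 0 < d)
    (P : Set (Pt d)) (hP : IsLatticePolytope P) (hdim : polyDim P = d)
    (hcn : ConvexNormal ((d : ℚ) + 1) P) :
    IntegrallyClosed P := by
  rcases Nat.lt_or_ge d 2 with hd2 | hd2
  · have hd1 : d = 1 := by omega
    subst hd1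
    exact my_oneD hP
  · intro c
    induction c using Nat.strong_induction_on with
    | _ c IH =>
      intro hc z hz hzl
      rcases Nat.lt_or_ge c 2 with hlt | hge
      · have hc1 : c = 1 := by omega
        subst hc1
        rw [Nat.cast_one, one_smul] at hz
        exact ⟨fun _ => z, fun _ => ⟨hz, hzl⟩, by simp⟩
      · obtain ⟨m, hm, h2m, hub⟩ := my_m_facts d c hd2 hge
        obtain ⟨y, hy, hyl, hzy, hzyl⟩ := my_cn_step hP hcn c m hm h2m hub hz hzl
        have h1 : 0 < c - m := by omega
        have h2 : c - m < c := by omega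
        have h3 : m < c := by omega
        obtain ⟨x1, hx1, hs1⟩ := IH (c - m) h2 h1 y hy hyl
        obtain ⟨x2, hx2, hs2⟩ := IH m h3 hm (z - y) hzy hzyl
        have hcm : (c - m) + m = c := by omega
        refine ⟨fun i => Fin.append x1 x2 (Fin.cast hcm.symm i), ?_, ?_⟩
        · intro i
          refine Fin.addCases
            (motive := fun j => Fin.append x1 x2 j ∈ P ∧ IsLatticePt (Fin.append x1 x2 j))
            ?_ ?_ (Fin.cast hcm.symm i)
          · intro j; rw [Fin.append_left]; exact hx1 j
          · intro j; rw [Fin.append_right]; exact hx2 j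
        · have hre : ∑ i : Fin c, Fin.append x1 x2 (Fin.cast hcm.symm i)
              = ∑ j : Fin ((c - m) + m), Fin.append x1 x2 j :=
            Fintype.sum_equiv (finCongr hcm.symm) _ _ (fun i => rfl)
          rw [hre, Fin.sum_univ_add]
          simp only [Fin.append_left, Fin.append_right]
          rw [hs1, hs2]
          abel
end
end

section
/- Let d be a positive integer and let □ ⊂ ℝ^d be a rational parallelepiped of dimension d, i.e., □ = z + {Σ_{i=1}^d λ_i·w_i : 0 ≤ λ_i ≤ 1} with z ∈ ℚ^d and w₁,…,w_d ∈ ℚ^d linearly independent. If every edge of □ has lattice length at least 1, then for every rational c ≥ 1 one has c□ = ⋃ (x + □), where the union is over all vertices v of □ and all x ∈ (c−1)□ ∩ ((c−1)v + ℤ^d). -/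
open Set Metric Pointwise

noncomputable section

private lemma repr_sum' {d : ℕ} (B : Module.Basis (Fin d) ℝ (Pt d)) (lam : Fin d → ℝ) (j : Fin d) :
    B.repr (∑ i, lam i • B i) j = lam j := by
  simp [Module.Basis.repr_sum_self, Finsupp.single_apply]

private lemma mem_para_iff' {d : ℕ} (z : Pt d) (w : Fin d → Pt d)
    (B : Module.Basis (Fin d) ℝ (Pt d)) (hB : ∀ i, B i = w i) (x : Pt d) :
    x ∈ Parallelepiped z w ↔ ∀ j, B.repr (x - z) j ∈ Icc (0:ℝ) 1 := by
  constructor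
  · rintro ⟨lam, hlam, rfl⟩ j
    have h : z + ∑ i, lam i • w i - z = ∑ i, lam i • B i := by
      simp [hB]
    rw [h, repr_sum']
    exact hlam j
  · intro h
    refine ⟨fun j => B.repr (x - z) j, h, ?_⟩
    have h2 : ∑ i, B.repr (x - z) i • w i = x - z := by
      calc ∑ i, B.repr (x - z) i • w i = ∑ i, B.repr (x - z) i • B i := by
            simp [hB]
        _ = x - z := B.sum_repr (x - z)
    rw [h2]; abel

private lemma repr_combo' {d : ℕ} (z : Pt d) (B : Module.Basis (Fin d) ℝ (Pt d)) {a b : ℝ}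
    (hab : a + b = 1) (x1 x2 : Pt d) (j : Fin d) :
    B.repr (a • x1 + b • x2 - z) j = a * B.repr (x1 - z) j + b * B.repr (x2 - z) j := by
  have h : a • x1 + b • x2 - z = a • (x1 - z) + b • (x2 - z) := by
    match_scalars <;> linarith
  rw [h]; simp

private lemma combo_zero' {a b p q : ℝ} (ha : 0 < a) (hb : 0 < b) (hp : 0 ≤ p) (hq : 0 ≤ q)
    (h : a * p + b * q = 0) : p = 0 ∧ q = 0 := by
  constructor <;> nlinarith

private lemma vertex_extreme' {d : ℕ} (z : Pt d) (w : Fin d → Pt d)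
    (B : Module.Basis (Fin d) ℝ (Pt d)) (hB : ∀ i, B i = w i)
    (s : Fin d → ℝ) (hs : ∀ i, s i = 0 ∨ s i = 1) :
    z + ∑ i, s i • w i ∈ Set.extremePoints ℝ (Parallelepiped z w) := by
  have hrepr : ∀ j, B.repr (z + ∑ i, s i • w i - z) j = s j := by
    intro j
    rw [show z + ∑ i, s i • w i - z = ∑ i, s i • B i by simp [hB]]
    exact repr_sum' B s j
  refine ⟨⟨s, fun i => ?_, rfl⟩, ?_⟩
  · rcases hs i with h | h <;> simp [h]
  · intro x1 h1 x2 h2 hseg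
    rw [mem_para_iff' z w B hB] at h1 h2
    obtain ⟨a, b, ha, hb, hab, hx⟩ := hseg
    have key : ∀ j, B.repr (x1 - z) j = s j ∧ B.repr (x2 - z) j = s j := by
      intro j
      have hc := repr_combo' z B hab x1 x2 j
      rw [hx, hrepr j] at hc
      obtain ⟨h1j, h1j'⟩ := h1 j
      obtain ⟨h2j, h2j'⟩ := h2 j
      rcases hs j with h | h
      · rw [h] at hc ⊢
        exact combo_zero' ha hb h1j h2j hc.symm
      · rw [h] at hc ⊢
        have : a * (1 - B.repr (x1 - z) j) + b * (1 - B.repr (x2 - z) j) = 0 := by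
          rw [mul_sub, mul_sub]; linarith
        obtain ⟨e1, e2⟩ := combo_zero' ha hb (by linarith) (by linarith) this
        constructor <;> linarith
    have recon : ∀ y : Pt d, (∀ j, B.repr (y - z) j = s j) → y = z + ∑ i, s i • w i := by
      intro y hy
      have h2 : ∑ i, s i • w i = y - z := by
        calc ∑ i, s i • w i = ∑ i, B.repr (y - z) i • B i := by
              refine Finset.sum_congr rfl fun i _ => ?_
              rw [hy i, hB i]
          _ = y - z := B.sum_repr (y - z)
      rw [h2]; abel
    exact recon x1 fun j => (key j).1

private lemma segment_mem_iff' {d : ℕ} (z u x : Pt d) :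
    x ∈ segment ℝ z (z + u) ↔ ∃ θ ∈ Icc (0:ℝ) 1, x = z + θ • u := by
  rw [segment_eq_image']
  simp only [add_sub_cancel_left, Set.mem_image]
  constructor
  · rintro ⟨θ, hθ, rfl⟩; exact ⟨θ, hθ, rfl⟩
  · rintro ⟨θ, hθ, rfl⟩; exact ⟨θ, hθ, rfl⟩

private lemma edge_para' {d : ℕ} (z : Pt d) (w : Fin d → Pt d)
    (hind : LinearIndependent ℝ w)
    (B : Module.Basis (Fin d) ℝ (Pt d)) (hB : ∀ i, B i = w i) (k : Fin d) :
    (z ≠ z + w k) ∧ IsExtreme ℝ (Parallelepiped z w) (segment ℝ z (z + w k)) := by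
  have hwk : w k ≠ 0 := hind.ne_zero k
  constructor
  · intro h
    apply hwk
    have := h.symm
    rwa [add_eq_left] at this
  constructor
  · -- segment ⊆ P
    intro x hx
    obtain ⟨θ, hθ, rfl⟩ := (segment_mem_iff' z (w k) x).mp hx
    refine ⟨fun j => if j = k then θ else 0, fun j => ?_, ?_⟩
    · by_cases h : j = k <;> simp [h]; exact hθ
    · congr 1
      rw [Finset.sum_eq_single k (fun i _ hik => by simp [hik]) (by simp)]
      simp
  · intro x1 h1 x2 h2 x hx hseg
    rw [mem_para_iff' z w B hB] at h1 h2
    obtain ⟨θ, hθ, rfl⟩ := (segment_mem_iff' z (w k) x).mp hx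
    have hrepr : ∀ j, B.repr (z + θ • w k - z) j = if j = k then θ else 0 := by
      intro j
      rw [show z + θ • w k - z = ∑ i, (fun i => if i = k then θ else 0 : Fin d → ℝ) i • B i by
        rw [Finset.sum_eq_single k (fun i _ hik => by simp [hik]) (by simp)]
        simp [hB]]
      exact repr_sum' B _ j
    obtain ⟨a, b, ha, hb, hab, hx'⟩ := hseg
    have key : ∀ j, j ≠ k → B.repr (x1 - z) j = 0 ∧ B.repr (x2 - z) j = 0 := by
      intro j hj
      have hc := repr_combo' z B hab x1 x2 j
      rw [hx', hrepr j, if_neg hj] at hc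
      exact combo_zero' ha hb (h1 j).1 (h2 j).1 hc.symm
    have recon : ∀ y : Pt d, (∀ j, B.repr (y - z) j ∈ Icc (0:ℝ) 1) →
        (∀ j, j ≠ k → B.repr (y - z) j = 0) → y ∈ segment ℝ z (z + w k) := by
      intro y hy hy0
      rw [segment_mem_iff']
      refine ⟨B.repr (y - z) k, hy k, ?_⟩
      have h2 : B.repr (y - z) k • w k = y - z := by
        calc B.repr (y - z) k • w k = ∑ i, B.repr (y - z) i • B i := by
              rw [Finset.sum_eq_single k (fun i _ hik => by rw [hy0 i hik, zero_smul]) (by simp), hB k]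
          _ = y - z := B.sum_repr (y - z)
      rw [h2]; abel
    exact recon x1 h1 fun j hj => (key j hj).1

private lemma choose_mu' (c a t : ℝ) (hc : 1 ≤ c) (ha0 : 0 ≤ a) (hac : a ≤ c) (ht : 1 ≤ t) :
    ∃ (s : ℝ) (k : ℤ), (s = 0 ∨ s = 1) ∧
      0 ≤ (c-1)*s + k/t ∧ (c-1)*s + k/t ≤ c-1 ∧
      a - 1 ≤ (c-1)*s + k/t ∧ (c-1)*s + k/t ≤ a := by
  have ht0 : (0:ℝ) < t := lt_of_lt_of_le one_pos ht
  have htinv : 1/t ≤ 1 := by rw [div_le_one ht0]; exact ht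
  by_cases h1 : c - 1 < a
  · refine ⟨1, 0, Or.inr rfl, ?_, ?_, ?_, ?_⟩ <;> push_cast <;>
      · simp only [mul_one, zero_div, add_zero] <;> linarith
  · push_neg at h1
    by_cases h2 : a < 1
    · refine ⟨0, 0, Or.inl rfl, ?_, ?_, ?_, ?_⟩ <;> push_cast <;>
        · simp only [mul_zero, zero_div, add_zero, zero_add] <;> linarith
    · push_neg at h2
      have hkle : (⌈(a-1)*t⌉ : ℝ) < (a-1)*t + 1 := Int.ceil_lt_add_one _
      have hkge : ((a-1)*t : ℝ) ≤ (⌈(a-1)*t⌉ : ℝ) := Int.le_ceil _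
      have hub : (⌈(a-1)*t⌉ : ℝ)/t ≤ a := by
        rw [div_le_iff₀ ht0]
        nlinarith
      have hlb : a - 1 ≤ (⌈(a-1)*t⌉ : ℝ)/t := by
        rw [le_div_iff₀ ht0]
        nlinarith
      refine ⟨0, ⌈(a-1)*t⌉, Or.inl rfl, ?_, ?_, ?_, ?_⟩ <;>
        simp only [mul_zero, zero_add] <;> linarith

private lemma apply_sum' {d : ℕ} (y : Pt d) (f : Fin d → Pt d) (j : Fin d) :
    (y + ∑ i, f i) j = y j + ∑ i, f i j := by
  rw [show (y + ∑ i, f i) j = y j + (∑ i, f i) j from rfl, WithLp.ofLp_sum, Finset.sum_apply]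


private theorem rat_decomp {d : ℕ} (v : Pt d) (hv : IsRatPt v) (hne : v ≠ 0) :
    ∃ (t : ℝ) (u : Fin d → ℤ), 0 < t ∧ IsPrimitive u ∧ ∀ i, v i = t * (u i : ℝ) := by
  choose q hq using hv
  set N : ℕ := Finset.univ.lcm fun i => (q i).den with hN
  have hNpos : 0 < N := by
    rw [hN]
    refine Nat.pos_of_ne_zero ?_
    simp [Finset.lcm_eq_zero_iff, Rat.den_ne_zero]
  have hm : ∀ i, ∃ m : ℤ, (q i : ℝ) = m / N := by
    intro i
    obtain ⟨k, hk⟩ := Finset.dvd_lcm (f := fun i => (q i).den) (Finset.mem_univ i)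
    have hk0 : k ≠ 0 := by rintro rfl; rw [mul_zero] at hk; omega
    refine ⟨(q i).num * k, ?_⟩
    have hden : ((q i).den : ℝ) ≠ 0 := by positivity
    have hk0' : (k : ℝ) ≠ 0 := by exact_mod_cast hk0
    rw [Rat.cast_def, hN, hk]
    push_cast
    field_simp
  choose m hmeq using hm
  -- some m i ≠ 0
  have hmne : ∃ i, m i ≠ 0 := by
    by_contra h
    push_neg at h
    apply hne
    ext i
    simp [hq, hmeq, h i]
  set g : ℤ := Finset.univ.gcd m with hg
  have hgpos : 0 < g := by
    obtain ⟨i, hi⟩ := hmne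
    have : g ≠ 0 := by
      intro h0
      exact hi (Finset.gcd_eq_zero_iff.mp h0 i (Finset.mem_univ i))
    have h2 : 0 ≤ g := by
      have := Finset.normalize_gcd (s := (Finset.univ : Finset (Fin d))) (f := m)
      rw [← hg] at this
      rw [← this, ← Int.abs_eq_normalize]
      exact abs_nonneg g
    omega
  have hdvd : ∀ i, g ∣ m i := fun i => Finset.gcd_dvd (Finset.mem_univ i)
  choose u hu using hdvd
  refine ⟨(g : ℝ) / N, u, by positivity, ?_, ?_⟩
  · have : Finset.univ.gcd m = normalize g * Finset.univ.gcd u := by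
      rw [show m = fun i => g * u i from funext hu]
      exact Finset.gcd_mul_left
    rw [Int.normalize_of_nonneg hgpos.le] at this
    have hgu : g * Finset.univ.gcd u = g * 1 := by rw [mul_one, ← this, hg]
    exact mul_left_cancel₀ hgpos.ne' hgu
  · intro i
    rw [hq, hmeq, hu i]
    have hNne : (N : ℝ) ≠ 0 := by positivity
    push_cast
    field_simp


/-- Lemma 2.4(b). For a rational `d`-parallelepiped all of whose edges have
lattice length at least `1`, the convex-normality equality holds for every rational `c ≥ 1`. -/
theorem statement5 (d : ℕ) (hd : 0 < d) (z : Pt d) (w : Fin d → Pt d)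
    (hz : IsRatPt z) (hw : ∀ i, IsRatPt (w i)) (hind : LinearIndependent ℝ w)
    (P : Set (Pt d)) (hP : P = Parallelepiped z w)
    (hedges : EdgeLengthsGE P 1)
    (c : ℚ) (hc : 1 ≤ c) :
    (c : ℝ) • P = cnUnion P (c : ℝ) := by
  haveI : Nonempty (Fin d) := Fin.pos_iff_nonempty.mp hd
  have hc1 : (1:ℝ) ≤ (c:ℝ) := by exact_mod_cast hc
  have hcpos : (0:ℝ) < (c:ℝ) := lt_of_lt_of_le one_pos hc1
  set B : Module.Basis (Fin d) ℝ (Pt d) :=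
    basisOfLinearIndependentOfCardEqFinrank hind (by simp) with hBdef
  have hB : ∀ i, B i = w i := fun i => by
    rw [hBdef, coe_basisOfLinearIndependentOfCardEqFinrank]
  have hPmem : ∀ x, x ∈ P ↔ ∀ j, B.repr (x - z) j ∈ Icc (0:ℝ) 1 := fun x => by
    rw [hP]; exact mem_para_iff' z w B hB x
  have hzP : z ∈ P := by
    rw [hP]; exact ⟨0, fun i => by simp, by simp⟩
  have hconv : Convex ℝ P := by
    intro x1 h1 x2 h2 a b ha hb hab
    rw [hPmem] at h1 h2 ⊢
    intro j
    rw [repr_combo' z B hab]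
    have := (convex_Icc (0:ℝ) 1) (h1 j) (h2 j) ha hb hab
    simpa using this
  -- decompose each w i
  have hdec : ∀ i : Fin d, ∃ (t : ℝ) (u : Fin d → ℤ), 1 ≤ t ∧ IsPrimitive u ∧
      ∀ j, w i j = t * (u j : ℝ) := by
    intro i
    obtain ⟨t, u, ht0, hprim, hcoord⟩ := rat_decomp (w i) (hw i) (hind.ne_zero i)
    have hedge : IsEdge P z (z + w i) := by
      rw [hP]; exact edge_para' z w hind B hB i
    have h1t : (1:ℝ) ≤ t := by
      refine hedges z (z + w i) hedge u t ht0 hprim fun j => ?_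
      show z j + w i j - z j = t * u j
      rw [hcoord j]; ring
    exact ⟨t, u, h1t, hprim, hcoord⟩
  choose t u ht hprim hcoord using hdec
  have ht0 : ∀ i, (t i) ≠ 0 := fun i => ne_of_gt (lt_of_lt_of_le one_pos (ht i))
  ext y
  constructor
  · rintro ⟨x₀, hx₀, rfl⟩
    set lam : Fin d → ℝ := fun j => B.repr (x₀ - z) j with hlamdef
    have hlam : ∀ j, lam j ∈ Icc (0:ℝ) 1 := (hPmem x₀).mp hx₀
    set a : Fin d → ℝ := fun j => (c:ℝ) * lam j with hadef
    have ha0 : ∀ j, 0 ≤ a j := fun j => mul_nonneg hcpos.le (hlam j).1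
    have hac : ∀ j, a j ≤ c := fun j => by
      calc (c:ℝ) * lam j ≤ (c:ℝ) * 1 := by
            exact mul_le_mul_of_nonneg_left (hlam j).2 hcpos.le
        _ = c := mul_one _
    have hchoice : ∀ j, ∃ (s : ℝ) (k : ℤ), (s = 0 ∨ s = 1) ∧
        0 ≤ ((c:ℝ)-1)*s + k/(t j) ∧ ((c:ℝ)-1)*s + k/(t j) ≤ (c:ℝ)-1 ∧
        a j - 1 ≤ ((c:ℝ)-1)*s + k/(t j) ∧ ((c:ℝ)-1)*s + k/(t j) ≤ a j :=
      fun j => choose_mu' c (a j) (t j) hc1 (ha0 j) (hac j) (ht j)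
    choose s k hs hmu0 hmuc hmua1 hmua using hchoice
    set μ : Fin d → ℝ := fun j => ((c:ℝ)-1)*(s j) + (k j)/(t j) with hmudef
    have hmu0' : ∀ j, 0 ≤ μ j := hmu0
    have hmuc' : ∀ j, μ j ≤ (c:ℝ)-1 := hmuc
    have hmua1' : ∀ j, a j - 1 ≤ μ j := hmua1
    have hmua' : ∀ j, μ j ≤ a j := hmua
    refine ⟨z + ∑ i, s i • w i, by rw [hP]; exact vertex_extreme' z w B hB s hs,
      ((c:ℝ)-1)•z + ∑ i, μ i • w i, ?_, ?_, z + ∑ i, (a i - μ i) • w i, ?_, ?_⟩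
    · -- x ∈ (c-1) • P
      by_cases hceq : (c:ℝ) = 1
      · have hμ0 : ∀ i, μ i = 0 := fun i =>
          le_antisymm (by have h := hmuc' i; rw [hceq] at h; simpa using h) (hmu0' i)
        exact ⟨z, hzP, by rw [hceq]; simp [hμ0]⟩
      · have hcgt : (0:ℝ) < (c:ℝ) - 1 := by
          rcases lt_or_eq_of_le hc1 with h | h
          · linarith
          · exact absurd h.symm hceq
        refine ⟨z + ∑ i, (μ i/((c:ℝ)-1)) • w i, ?_, ?_⟩
        · rw [hP]
          exact ⟨fun i => μ i/((c:ℝ)-1), fun i =>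
            ⟨div_nonneg (hmu0' i) hcgt.le, (div_le_one hcgt).mpr (hmuc' i)⟩, rfl⟩
        · show ((c:ℝ)-1) • (z + ∑ i, (μ i/((c:ℝ)-1)) • w i) = ((c:ℝ)-1)•z + ∑ i, μ i • w i
          rw [smul_add, Finset.smul_sum]
          congr 1
          refine Finset.sum_congr rfl fun i _ => ?_
          rw [smul_smul, mul_div_cancel₀ _ (ne_of_gt hcgt)]
    · -- lattice point
      intro j
      refine ⟨∑ i, k i * u i j, ?_⟩
      have hxj : ((((c:ℝ)-1)•z + ∑ i, μ i • w i) - ((c:ℝ)-1)•(z + ∑ i, s i • w i)) j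
          = ∑ i, (μ i - ((c:ℝ)-1) * s i) * w i j := by
        have e1 : ((((c:ℝ)-1)•z + ∑ i, μ i • w i)) j
            = ((c:ℝ)-1)*(z j) + ∑ i, μ i * w i j := by
          rw [apply_sum' (((c:ℝ)-1)•z) (fun i => μ i • w i) j]
          rfl
        have e2 : ((z + ∑ i, s i • w i)) j = z j + ∑ i, s i * w i j := by
          rw [apply_sum' z (fun i => s i • w i) j]
          rfl
        have e3 : ((((c:ℝ)-1)•z + ∑ i, μ i • w i) - ((c:ℝ)-1)•(z + ∑ i, s i • w i)) j
            = ((((c:ℝ)-1)•z + ∑ i, μ i • w i)) j - ((c:ℝ)-1)*(((z + ∑ i, s i • w i)) j) :=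
          rfl
        rw [e3, e1, e2, mul_add, Finset.mul_sum]
        have e4 : ((c:ℝ)-1)*z j + (∑ i, μ i * w i j)
            - (((c:ℝ)-1)*z j + ∑ i, ((c:ℝ)-1)*(s i * w i j))
            = (∑ i, μ i * w i j) - ∑ i, ((c:ℝ)-1)*(s i * w i j) := by ring
        rw [e4, ← Finset.sum_sub_distrib]
        exact Finset.sum_congr rfl fun i _ => by ring
      rw [hxj]
      push_cast
      refine Finset.sum_congr rfl fun i _ => ?_
      rw [hcoord i j]
      show (((c:ℝ)-1)*(s i) + (k i)/(t i) - ((c:ℝ)-1) * s i) * (t i * u i j)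
        = (k i : ℝ) * (u i j : ℝ)
      field_simp [ht0 i]
      ring
    · -- p ∈ P
      rw [hP]
      exact ⟨fun i => a i - μ i, fun i =>
        ⟨by show (0:ℝ) ≤ a i - μ i; linarith [hmua' i],
         by show a i - μ i ≤ 1; linarith [hmua1' i]⟩, rfl⟩
    · -- y = x + p
      have hsum : (∑ i, μ i • w i) + ∑ i, (a i - μ i) • w i = (c:ℝ) • (x₀ - z) := by
        rw [← Finset.sum_add_distrib]
        have h1 : ∀ i ∈ Finset.univ, μ i • w i + (a i - μ i) • w i
            = (c:ℝ) • (lam i • w i) := fun i _ => by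
          rw [← add_smul, add_sub_cancel, smul_smul]
        rw [Finset.sum_congr rfl h1, ← Finset.smul_sum]
        congr 1
        calc ∑ i, lam i • w i = ∑ i, B.repr (x₀ - z) i • B i := by
              refine Finset.sum_congr rfl fun i _ => ?_
              rw [hB i]
          _ = x₀ - z := B.sum_repr (x₀ - z)
      have : ((((c:ℝ)-1)•z + ∑ i, μ i • w i)) + (z + ∑ i, (a i - μ i) • w i)
          = ((((c:ℝ)-1)•z + z)) + (((∑ i, μ i • w i)) + ∑ i, (a i - μ i) • w i) := by
        abel
      rw [this, hsum]
      match_scalars <;> ring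
  · rintro ⟨v, hv, x, hx, hlat, p, hp, rfl⟩
    obtain ⟨q, hq, hxq⟩ := hx
    have hxq' : ((c:ℝ)-1) • q = x := hxq
    by_cases hceq : (c:ℝ) = 1
    · rw [hceq, one_smul]
      have hx0 : x = 0 := by
        rw [← hxq', hceq]
        simp
      rw [hx0, zero_add]
      exact hp
    · have hcgt : (0:ℝ) < (c:ℝ) - 1 := by
        rcases lt_or_eq_of_le hc1 with h | h
        · linarith
        · exact absurd h.symm hceq
      refine ⟨(((c:ℝ)-1)/(c:ℝ))•q + ((1:ℝ)/(c:ℝ))•p,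
        hconv hq hp (by positivity) (by positivity) (by field_simp; ring), ?_⟩
      show (c:ℝ) • ((((c:ℝ)-1)/(c:ℝ))•q + ((1:ℝ)/(c:ℝ))•p) = x + p
      rw [smul_add, smul_smul, smul_smul, mul_div_cancel₀ _ (ne_of_gt hcpos),
        mul_one_div, div_self (ne_of_gt hcpos), one_smul, hxq']
end
end

section
/- Let d be a positive integer and let P ⊂ ℝ^d be a rational polytope of dimension d. Then for every rational c with 1 ≤ c ≤ (d+1)/d one has cP = ⋃ (x + P), where the union is over all vertices v of P and all x ∈ (c−1)P ∩ ((c−1)v + ℤ^d). -/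
open Set Metric Pointwise

noncomputable section

/-- Lemma 2.4(c). For any rational `d`-polytope `P` and any rational `c` with
`1 ≤ c ≤ (d+1)/d`, the convex-normality equality holds. -/
theorem statement6 (d : ℕ) (hd : 0 < d)
    (P : Set (Pt d)) (hP : IsRationalPolytope P) (hdim : polyDim P = d)
    (c : ℚ) (hc1 : 1 ≤ c) (hc2 : c ≤ ((d : ℚ) + 1) / (d : ℚ)) :
    (c : ℝ) • P = cnUnion P (c : ℝ) := by
  classical
  obtain ⟨V, -, hPV⟩ := hP
  set r : ℝ := (c : ℝ) with hr
  have hr1 : (1 : ℝ) ≤ r := by rw [hr]; exact_mod_cast hc1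
  have hr0 : (0 : ℝ) < r := lt_of_lt_of_le one_pos hr1
  have hd0 : (0 : ℝ) < (d : ℝ) := by exact_mod_cast hd
  have hrd : r * d ≤ (d : ℝ) + 1 := by
    have h2 : (c : ℝ) ≤ ((((d : ℚ) + 1) / (d : ℚ) : ℚ) : ℝ) := by exact_mod_cast hc2
    push_cast at h2
    have : r ≤ ((d : ℝ) + 1) / (d : ℝ) := by rw [hr]; exact h2
    calc r * d ≤ (((d : ℝ) + 1) / d) * d := by
            exact mul_le_mul_of_nonneg_right this hd0.le
      _ = (d : ℝ) + 1 := by field_simp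
  have hconv : Convex ℝ P := by rw [hPV]; exact convex_convexHull ℝ _
  have hcomp : IsCompact P := by rw [hPV]; exact V.finite_toSet.isCompact_convexHull (𝕜 := ℝ)
  have hextfin : (Set.extremePoints ℝ P).Finite := by
    apply Set.Finite.subset V.finite_toSet
    rw [hPV]; exact extremePoints_convexHull_subset
  have hKM : P = convexHull ℝ (Set.extremePoints ℝ P) := by
    have h1 := closure_convexHull_extremePoints hcomp hconv
    rw [(hextfin.isCompact_convexHull (𝕜 := ℝ)).isClosed.closure_eq] at h1
    exact h1.symm
  apply Set.Subset.antisymm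
  · -- forward inclusion
    rintro y ⟨p, hp, rfl⟩
    have hp' : p ∈ convexHull ℝ (Set.extremePoints ℝ P) := hKM ▸ hp
    rw [convexHull_eq_union] at hp'
    simp only [Set.mem_iUnion, exists_prop] at hp'
    obtain ⟨t, hts, hai, hpt⟩ := hp'
    rw [Finset.convexHull_eq] at hpt
    obtain ⟨w, hw0, hwsum, hwc⟩ := hpt
    have hp_eq : ∑ v ∈ t, w v • v = p := by
      rw [← hwc, Finset.centerMass_eq_of_sum_1 _ _ hwsum]
      simp
    -- card bound
    have hcard : (t.card : ℝ) ≤ (d : ℝ) + 1 := by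
      have h1 := hai.card_le_finrank_succ
      rw [Fintype.card_coe] at h1
      have h2 : Module.finrank ℝ (vectorSpan ℝ (Set.range ((↑) : t → Pt d))) ≤ d := by
        have := Submodule.finrank_le (vectorSpan ℝ (Set.range ((↑) : t → Pt d)))
        simpa [finrank_euclideanSpace_fin] using this
      exact_mod_cast h1.trans (Nat.add_le_add_right h2 1)
    have hne : t.Nonempty := by
      rcases t.eq_empty_or_nonempty with h | h
      · rw [h, Finset.sum_empty] at hwsum; norm_num at hwsum
      · exact h
    obtain ⟨i₀, hi₀t, hi₀⟩ := t.exists_max_image w hne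
    have hmax : 1 ≤ (t.card : ℝ) * w i₀ := by
      calc (1 : ℝ) = ∑ v ∈ t, w v := hwsum.symm
        _ ≤ t.card • w i₀ := Finset.sum_le_card_nsmul _ _ _ (fun i hi => hi₀ i hi)
        _ = (t.card : ℝ) * w i₀ := by rw [nsmul_eq_mul]
    have hwi₀ : 0 ≤ w i₀ := hw0 i₀ hi₀t
    have hkey : r - 1 ≤ r * w i₀ := by
      have hA : 1 ≤ ((d : ℝ) + 1) * w i₀ :=
        le_trans hmax (mul_le_mul_of_nonneg_right hcard hwi₀)
      have hB := mul_le_mul_of_nonneg_left hA hr0.le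
      nlinarith [hB, hrd, hd0, hwi₀]
    have hvP : ∀ v ∈ t, v ∈ P := fun v hv => extremePoints_subset (hts hv)
    set μ : Pt d → ℝ := fun v => r * w v - (if v = i₀ then r - 1 else 0) with hμ
    have hμ0 : ∀ v ∈ t, 0 ≤ μ v := by
      intro v hv
      by_cases h : v = i₀
      · subst h; simpa [hμ] using hkey
      · simp only [hμ, h, if_false, sub_zero]
        exact mul_nonneg hr0.le (hw0 v hv)
    have hμsum : ∑ v ∈ t, μ v = 1 := by
      simp only [hμ, Finset.sum_sub_distrib, ← Finset.mul_sum, hwsum,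
        Finset.sum_ite_eq' t i₀ (fun _ => r - 1), hi₀t, if_true]
      ring
    have hmem : (∑ v ∈ t, μ v • v) ∈ P := hconv.sum_mem hμ0 hμsum hvP
    have hcomb : ∑ v ∈ t, μ v • v = r • p - (r - 1) • i₀ := by
      have key : ∀ v ∈ t, μ v • v
          = r • (w v • v) - (if v = i₀ then (r - 1) • i₀ else 0) := by
        intro v hv
        by_cases h : v = i₀
        · subst h; simp only [hμ, if_true, sub_smul, smul_smul]
        · simp only [hμ, h, if_false, sub_zero, smul_smul]
      rw [Finset.sum_congr rfl key, Finset.sum_sub_distrib, ← Finset.smul_sum, hp_eq,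
        Finset.sum_ite_eq' t i₀ (fun _ => (r - 1) • i₀), if_pos hi₀t]
    refine ⟨i₀, hts hi₀t, (r - 1) • i₀, ?_, ?_, r • p - (r - 1) • i₀, ?_, ?_⟩
    · exact Set.smul_mem_smul_set (hvP i₀ hi₀t)
    · intro j
      exact ⟨0, by simp⟩
    · rw [← hcomb]; exact hmem
    · abel
  · -- reverse inclusion
    rintro y ⟨v, -, x, hx, -, p, hp, rfl⟩
    obtain ⟨q, hq, rfl⟩ := hx
    have hmem : ((r - 1) / r) • q + (1 / r) • p ∈ P :=
      hconv hq hp (div_nonneg (by linarith) hr0.le) (by positivity) (by field_simp; ring)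
    refine ⟨((r - 1) / r) • q + (1 / r) • p, hmem, ?_⟩
    show r • (((r - 1) / r) • q + (1 / r) • p) = (r - 1) • q + p
    have h1 : r * ((r - 1) / r) = r - 1 := by field_simp
    have h2 : r * (1 / r) = 1 := by field_simp
    rw [smul_add, smul_smul, smul_smul, h1, h2, one_smul]
end
end

section
/- Let d ≥ 2 be an integer, k ∈ ℚ with k ≥ 2, and λ ∈ ℚ with λ > 0. Assume that every rational polytope Q ⊂ ℝ^d of dimension d−1 all of whose edges have lattice length at least (d/(d+1))·λ satisfies, for every rational c with 2 ≤ c ≤ k + (k−1)/d, the equality cQ = ⋃ (x + Q), the union over all vertices v of Q and all x ∈ (c−1)Q ∩ ((c−1)v + ℤ^d). Let P ⊂ ℝ^d be a rational polytope of dimension d all of whose edges have lattice length at least λ, let w be a vertex of P, let F be a facet of P with w ∉ F, and set Δ = conv({w} ∪ F) and ε = dist(w, aff(F))/(d+1). Then for every rational c with 2 ≤ c ≤ k, the set {x ∈ cΔ : dist(x, aff(cF)) ≤ ε} is contained in ⋃ (x + P), the union over all vertices v of P and all x ∈ (c−1)P ∩ ((c−1)v + ℤ^d). -/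
open Set Metric Pointwise

noncomputable section

-- infDist scaling
lemma aux_infDist_smul {d : ℕ} {c : ℝ} (hc : 0 < c) (x : Pt d) (s : Set (Pt d)) :
    infDist (c • x) (c • s) = c * infDist x s := by
  rcases s.eq_empty_or_nonempty with rfl | hs
  · simp [infDist_empty]
  have hs' : (c • s).Nonempty := hs.smul_set
  have hdist : ∀ a : Pt d, dist (c • x) (c • a) = c * dist x a := by
    intro a; rw [dist_smul₀]; simp [abs_of_pos hc]
  apply le_antisymm
  · by_contra hlt
    push_neg at hlt
    obtain ⟨r, hr1, hr2⟩ := exists_between hlt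
    have : infDist x s < r / c := by
      rw [lt_div_iff₀ hc]; nlinarith
    obtain ⟨y, hy, hdy⟩ := (infDist_lt_iff hs).1 this
    have : infDist (c • x) (c • s) ≤ dist (c • x) (c • y) :=
      infDist_le_dist_of_mem (smul_mem_smul_set hy)
    rw [hdist y] at this
    have : infDist (c • x) (c • s) < r := lt_of_le_of_lt this (by
      have := mul_lt_mul_of_pos_left hdy hc
      rwa [mul_div_cancel₀ _ hc.ne'] at this)
    linarith
  · by_contra hlt
    push_neg at hlt
    obtain ⟨y', hy', hdy⟩ := (infDist_lt_iff hs').1 hlt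
    obtain ⟨y, hy, rfl⟩ := hy'
    rw [hdist y] at hdy
    have : infDist x s ≤ dist x y := infDist_le_dist_of_mem hy
    nlinarith


lemma aux_infDist_add {d : ℕ} (v x : Pt d) (s : Set (Pt d)) :
    infDist (v + x) ((fun y => v + y) '' s) = infDist x s := by
  rcases s.eq_empty_or_nonempty with rfl | hs
  · simp [infDist_empty]
  have hs' : ((fun y => v + y) '' s).Nonempty := hs.image _
  apply le_antisymm
  · by_contra hlt
    push_neg at hlt
    obtain ⟨y, hy, hdy⟩ := (infDist_lt_iff hs).1 hlt
    exact absurd (infDist_le_dist_of_mem (mem_image_of_mem _ hy)) (by rw [dist_add_left]; linarith)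
  · by_contra hlt
    push_neg at hlt
    obtain ⟨y', ⟨y, hy, rfl⟩, hdy⟩ := (infDist_lt_iff hs').1 hlt
    rw [dist_add_left] at hdy
    exact absurd (infDist_le_dist_of_mem hy) (by linarith)

lemma aux_smul_submodule {d : ℕ} {c : ℝ} (hc : c ≠ 0) (D : Submodule ℝ (Pt d)) :
    c • (D : Set (Pt d)) = (D : Set (Pt d)) := by
  ext x
  constructor
  · rintro ⟨y, hy, rfl⟩; exact D.smul_mem c hy
  · intro hx; exact ⟨c⁻¹ • x, D.smul_mem _ hx, by simp [smul_smul, mul_inv_cancel₀ hc]⟩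

lemma aux_infDist_smul_submodule {d : ℕ} {t : ℝ} (ht : 0 ≤ t) (x : Pt d)
    (D : Submodule ℝ (Pt d)) :
    infDist (t • x) (D : Set (Pt d)) = t * infDist x D := by
  rcases eq_or_lt_of_le ht with rfl | htpos
  · simp [Metric.infDist_zero_of_mem D.zero_mem]
  · conv_lhs => rw [← aux_smul_submodule htpos.ne' D]
    exact aux_infDist_smul htpos x _

lemma aux_infDist_affine {d : ℕ} (A : AffineSubspace ℝ (Pt d)) {f : Pt d} (hf : f ∈ A)
    (u : Pt d) {t : ℝ} (ht : 0 ≤ t) :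
    infDist (f + t • u) (A : Set (Pt d)) = t * infDist (f + u) (A : Set (Pt d)) := by
  have hset : (A : Set (Pt d)) = (fun y => f + y) '' (A.direction : Set (Pt d)) := by
    ext x
    constructor
    · intro hx
      exact ⟨x - f, by simpa using AffineSubspace.vsub_mem_direction hx hf, by module⟩
    · rintro ⟨y, hy, rfl⟩
      have := AffineSubspace.vadd_mem_of_mem_direction hy hf
      simpa [add_comm] using this
  rw [hset, aux_infDist_add, aux_infDist_add, aux_infDist_smul_submodule ht]

/-- The affine map `x ↦ b + θ • x`. -/
def Tmap {d : ℕ} (b : Pt d) (θ : ℝ) : Pt d →ᵃ[ℝ] Pt d where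
  toFun := fun x => b + θ • x
  linear := θ • LinearMap.id
  map_vadd' := by
    intro p v
    simp only [LinearMap.smul_apply, LinearMap.id_apply, vadd_eq_add]
    module

lemma Tmap_apply {d : ℕ} (b : Pt d) (θ : ℝ) (x : Pt d) : Tmap b θ x = b + θ • x := rfl

lemma Tmap_inj {d : ℕ} (b : Pt d) {θ : ℝ} (hθ : θ ≠ 0) : Function.Injective (Tmap b θ) := by
  intro x y h
  simp only [Tmap_apply, add_right_inj] at h
  exact smul_right_injective _ hθ h

lemma aux_isExtreme_pullback {d : ℕ} {b : Pt d} {θ : ℝ} (hθ : θ ≠ 0) {F S : Set (Pt d)}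
    (h : IsExtreme ℝ (Tmap b θ '' F) (Tmap b θ '' S)) : IsExtreme ℝ F S := by
  constructor
  · intro x hx
    obtain ⟨x', hx', hxx⟩ := h.1 (mem_image_of_mem _ hx)
    exact (Tmap_inj b hθ hxx) ▸ hx'
  · intro x₁ hx₁ x₂ hx₂ z hz hzseg
    have hzseg' : Tmap b θ z ∈ openSegment ℝ (Tmap b θ x₁) (Tmap b θ x₂) := by
      rw [← image_openSegment]
      exact mem_image_of_mem _ hzseg
    obtain ⟨y₁, hy₁, hyy₁⟩ := h.2 (mem_image_of_mem _ hx₁) (mem_image_of_mem _ hx₂)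
      (mem_image_of_mem _ hz) hzseg'
    exact (Tmap_inj b hθ hyy₁) ▸ hy₁

lemma aux_extremePoints_pullback {d : ℕ} {b : Pt d} {θ : ℝ} (hθ : θ ≠ 0) {F : Set (Pt d)}
    {v : Pt d} (hv : v ∈ Set.extremePoints ℝ (Tmap b θ '' F)) :
    ∃ f ∈ Set.extremePoints ℝ F, v = Tmap b θ f := by
  obtain ⟨⟨f, hf, rfl⟩, hext⟩ := hv
  refine ⟨f, ⟨hf, ?_⟩, rfl⟩
  intro x₁ hx₁ x₂ hx₂ hseg
  have hseg' : Tmap b θ f ∈ openSegment ℝ (Tmap b θ x₁) (Tmap b θ x₂) := by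
    rw [← image_openSegment]; exact mem_image_of_mem _ hseg
  exact Tmap_inj b hθ (hext (mem_image_of_mem _ hx₁) (mem_image_of_mem _ hx₂) hseg')

lemma aux_vectorSpan_image {d : ℕ} (b : Pt d) {θ : ℝ} (hθ : θ ≠ 0) (F : Set (Pt d)) :
    vectorSpan ℝ (Tmap b θ '' F) = vectorSpan ℝ F := by
  rw [vectorSpan_def, vectorSpan_def]
  apply le_antisymm
  · rw [Submodule.span_le]
    rintro v hv
    rw [Set.mem_vsub] at hv
    obtain ⟨x', ⟨x, hx, rfl⟩, y', ⟨y, hy, rfl⟩, rfl⟩ := hv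
    have : Tmap b θ x -ᵥ Tmap b θ y = θ • (x - y) := by
      simp only [Tmap_apply, vsub_eq_sub]; module
    rw [this]
    exact Submodule.smul_mem _ _ (Submodule.subset_span (Set.vsub_mem_vsub hx hy))
  · rw [Submodule.span_le]
    rintro v hv
    rw [Set.mem_vsub] at hv
    obtain ⟨x, hx, y, hy, rfl⟩ := hv
    have : x -ᵥ y = θ⁻¹ • (Tmap b θ x -ᵥ Tmap b θ y) := by
      simp only [Tmap_apply, vsub_eq_sub]
      rw [add_sub_add_left_eq_sub, ← smul_sub, smul_smul, inv_mul_cancel₀ hθ, one_smul]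
    rw [this]
    exact Submodule.smul_mem _ _ (Submodule.subset_span
      (Set.vsub_mem_vsub (mem_image_of_mem _ hx) (mem_image_of_mem _ hy)))

lemma aux_mem_face_of_centerMass {d : ℕ} {A F : Set (Pt d)} (hA : Convex ℝ A)
    (hex : IsExtreme ℝ A F) (wt : Pt d → ℝ) :
    ∀ s : Finset (Pt d), (∀ y ∈ s, 0 < wt y) → (↑s : Set (Pt d)) ⊆ A →
      s.centerMass wt id ∈ F → (↑s : Set (Pt d)) ⊆ F := by
  classical
  intro s
  induction s using Finset.induction_on with
  | empty => intro _ _ _; simp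
  | @insert a t ha ih =>
    intro hpos hsub hcm
    rcases t.eq_empty_or_nonempty with rfl | htne
    · have : ({a} : Finset (Pt d)).centerMass wt id = a := by
        rw [Finset.centerMass_singleton (i := a) (w := wt) (z := id)
          (ne_of_gt (hpos a (by simp)))]
        rfl
      simp only [LawfulSingleton.insert_empty_eq] at hcm
      rw [this] at hcm
      simpa using hcm
    · have hsumpos : 0 < ∑ j ∈ t, wt j :=
        Finset.sum_pos (fun i hi => hpos i (Finset.mem_insert_of_mem hi)) htne
      have hwa : 0 < wt a := hpos a (Finset.mem_insert_self a t)
      have htA : (↑t : Set (Pt d)) ⊆ A :=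
        Subset.trans (by exact_mod_cast Finset.coe_subset.2 (Finset.subset_insert a t)) hsub
      have hzA : t.centerMass wt id ∈ A := by
        have : t.centerMass wt id ∈ convexHull ℝ (↑t : Set (Pt d)) :=
          t.centerMass_mem_convexHull (fun i hi => (hpos i (Finset.mem_insert_of_mem hi)).le)
            hsumpos (fun i hi => Finset.mem_coe.2 hi)
        exact convexHull_min htA hA this
      have hcm' := Finset.centerMass_insert (w := wt) (z := id) (i := a) (t := t) ha hsumpos.ne'
      rw [hcm'] at hcm
      have haA : a ∈ A := hsub (by simp)
      have hseg : (insert a t).centerMass wt id ∈ openSegment ℝ a (t.centerMass wt id) := by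
        rw [hcm']
        refine ⟨wt a / (wt a + ∑ j ∈ t, wt j), (∑ j ∈ t, wt j) / (wt a + ∑ j ∈ t, wt j),
          by positivity, by positivity, ?_, rfl⟩
        field_simp
      rw [hcm'] at hseg
      have haF := hex.2 haA hzA hcm hseg
      have hzF := hex.right_mem_of_mem_openSegment haA hzA hcm hseg
      have := ih (fun y hy => hpos y (Finset.mem_insert_of_mem hy)) htA hzF
      intro x hx
      rcases Finset.mem_insert.1 (Finset.mem_coe.1 hx) with rfl | hxt
      · exact haF
      · exact this (Finset.mem_coe.2 hxt)

lemma aux_face_eq_convexHull {d : ℕ} {V : Finset (Pt d)} {F : Set (Pt d)}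
    (hex : IsExtreme ℝ (convexHull ℝ (V : Set (Pt d))) F) (hFc : Convex ℝ F) :
    F = convexHull ℝ ((V : Set (Pt d)) ∩ F) := by
  apply Subset.antisymm
  · intro x hx
    have hxV : x ∈ convexHull ℝ (V : Set (Pt d)) := hex.1 hx
    rw [Finset.convexHull_eq] at hxV
    obtain ⟨wt, hw0, hw1, hcm⟩ := hxV
    classical
    set s : Finset (Pt d) := V.filter (fun y => wt y ≠ 0) with hs
    have hcm' : s.centerMass wt id = x := by
      rw [hs, Finset.centerMass_filter_ne_zero, hcm]
    have hpos : ∀ y ∈ s, 0 < wt y := by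
      intro y hy
      rw [hs, Finset.mem_filter] at hy
      exact lt_of_le_of_ne (hw0 y hy.1) (Ne.symm hy.2)
    have hsub : (↑s : Set (Pt d)) ⊆ convexHull ℝ (V : Set (Pt d)) := by
      intro y hy
      rw [hs] at hy
      exact subset_convexHull ℝ _ (Finset.mem_coe.2 (Finset.mem_filter.1 (Finset.mem_coe.1 hy)).1)
    have hsF : (↑s : Set (Pt d)) ⊆ F :=
      aux_mem_face_of_centerMass (convex_convexHull ℝ _) hex wt s hpos hsub (hcm' ▸ hx)
    have hssum : 0 < ∑ y ∈ s, wt y := by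
      have : ∑ y ∈ s, wt y = 1 := by
        rw [hs, Finset.sum_filter_ne_zero]; exact hw1
      rw [this]; norm_num
    have : s.centerMass wt id ∈ convexHull ℝ ((V : Set (Pt d)) ∩ F) := by
      apply s.centerMass_mem_convexHull (fun i hi => (hpos i hi).le) hssum
      intro i hi
      refine ⟨?_, hsF (Finset.mem_coe.2 hi)⟩
      rw [hs, Finset.mem_filter] at hi
      exact hi.1
    rwa [hcm'] at this
  · exact convexHull_min inter_subset_right hFc

lemma aux_not_mem_affineSpan {d : ℕ} {A F : Set (Pt d)} (hex : IsExtreme ℝ A F)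
    (VF : Finset (Pt d)) (hVF : F = convexHull ℝ (VF : Set (Pt d)))
    {w : Pt d} (hwA : w ∈ A) (hwF : w ∉ F) (hFne : F.Nonempty) :
    w ∉ (affineSpan ℝ F : AffineSubspace ℝ (Pt d)) := by
  intro hw
  classical
  have hVFne : VF.Nonempty := by
    rcases hFne with ⟨x, hx⟩
    rw [hVF] at hx
    by_contra h
    rw [Finset.not_nonempty_iff_eq_empty] at h
    rw [h] at hx
    simp at hx
  have hw' : w ∈ affineSpan ℝ (Set.range (Subtype.val : {x : Pt d // x ∈ VF} → Pt d)) := by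
    rw [Subtype.range_coe_subtype, Finset.setOf_mem]
    rw [hVF, affineSpan_convexHull] at hw
    exact hw
  obtain ⟨a, ha1, ha2⟩ := eq_affineCombination_of_mem_affineSpan_of_fintype hw'
  have hwlin : w = ∑ i : {x : Pt d // x ∈ VF}, a i • (i : Pt d) := by
    rw [ha2, Finset.affineCombination_eq_linear_combination _ _ _ ha1]
  have hne : Nonempty {x : Pt d // x ∈ VF} := by
    rcases hVFne with ⟨x, hx⟩
    exact ⟨⟨x, hx⟩⟩
  set n : ℕ := Fintype.card {x : Pt d // x ∈ VF} with hn
  have hnpos : 0 < n := Fintype.card_pos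
  have hnR : (0 : ℝ) < (n : ℝ) := by exact_mod_cast hnpos
  have hnne : (n : ℝ) ≠ 0 := hnR.ne'
  set S : ℝ := ∑ i : {x : Pt d // x ∈ VF}, |a i| with hS
  have hSnn : 0 ≤ S := Finset.sum_nonneg (fun i _ => abs_nonneg _)
  have hS1 : S + 1 ≠ 0 := by positivity
  set t : ℝ := 1 / ((n : ℝ) * (S + 1)) with ht
  have htpos : 0 < t := by positivity
  have ht1 : (1 : ℝ) + t ≠ 0 := by positivity
  have htS : t * (S + 1) = 1 / (n : ℝ) := by
    rw [ht]; field_simp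
  set b : {x : Pt d // x ∈ VF} → ℝ := fun i => (1 + t) / (n : ℝ) - t * a i with hb
  have hbnn : ∀ i, 0 ≤ b i := by
    intro i
    have h1 : a i ≤ S := by
      calc a i ≤ |a i| := le_abs_self _
      _ ≤ S := Finset.single_le_sum (f := fun i => |a i|) (fun j _ => abs_nonneg _)
            (Finset.mem_univ i)
    have h2 : t * a i ≤ t * (S + 1) := by nlinarith
    rw [htS] at h2
    have h3 : (1 : ℝ)/n ≤ (1 + t)/n := by gcongr; linarith
    show 0 ≤ (1 + t) / (n : ℝ) - t * a i
    linarith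
  have hbsum : ∑ i, b i = 1 := by
    simp only [hb]
    rw [Finset.sum_sub_distrib, Finset.sum_const, ← Finset.mul_sum, ha1]
    simp only [Finset.card_univ, nsmul_eq_mul, mul_one, ← hn]
    field_simp; ring
  set f : Pt d := ∑ i, b i • (i : Pt d) with hf
  set x₀ : Pt d := ∑ i : {x : Pt d // x ∈ VF}, ((n : ℝ)⁻¹) • (i : Pt d) with hx₀
  have hmem : ∀ (c : {x : Pt d // x ∈ VF} → ℝ), (∀ i, 0 ≤ c i) → ∑ i, c i = 1 →
      (∑ i, c i • (i : Pt d)) ∈ F := by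
    intro c hc0 hc1
    have := Finset.centerMass_mem_convexHull (t := (Finset.univ : Finset {x : Pt d // x ∈ VF}))
      (w := c) (z := fun i => (i : Pt d)) (fun i _ => hc0 i) (by rw [hc1]; norm_num)
      (fun i _ => by exact Finset.mem_coe.2 i.2)
    rw [Finset.centerMass_eq_of_sum_1 _ _ hc1] at this
    rwa [hVF]
  have hfF : f ∈ F := hmem b hbnn hbsum
  have hx₀F : x₀ ∈ F := by
    apply hmem
    · intro i; positivity
    · rw [Finset.sum_const, Finset.card_univ, ← hn, nsmul_eq_mul]
      field_simp
  have hkey : (t / (1 + t)) • w + (1 / (1 + t)) • f = x₀ := by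
    rw [hwlin, hf, hx₀, Finset.smul_sum, Finset.smul_sum, ← Finset.sum_add_distrib]
    apply Finset.sum_congr rfl
    intro i _
    rw [smul_smul, smul_smul, ← add_smul]
    congr 1
    simp only [hb]
    field_simp
    ring
  have hseg : x₀ ∈ openSegment ℝ w f := by
    refine ⟨t / (1 + t), 1 / (1 + t), by positivity, by positivity, ?_, hkey⟩
    rw [← add_div, add_comm, div_self ht1]
  exact hwF (hex.2 hwA (hex.1 hfF) hx₀F hseg)

set_option maxHeartbeats 1000000 in
/-- Lemma 3.2. The pyramid lemma: assuming `CN(d-1, k + (k-1)/d)` for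
rational `(d-1)`-polytopes with edges of lattice length `≥ (d/(d+1))λ`, the `ε`-layer of
`cΔ` along `cF` is covered by the translates `x + P`, where `Δ = conv(w, F)` and
`ε = dist(w, aff F)/(d+1)`. -/
theorem statement7 (d : ℕ) (hd : 2 ≤ d) (k : ℚ) (hk : 2 ≤ k) (lam : ℚ) (hlam : 0 < lam)
    (hyp : ∀ Q : Set (Pt d), IsRationalPolytope Q → polyDim Q = d - 1 →
      EdgeLengthsGE Q (((d : ℝ) / ((d : ℝ) + 1)) * (lam : ℝ)) →
      ∀ c : ℚ, 2 ≤ c → c ≤ k + (k - 1) / (d : ℚ) → (c : ℝ) • Q = cnUnion Q (c : ℝ))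
    (P : Set (Pt d)) (hP : IsRationalPolytope P) (hdim : polyDim P = d)
    (hedges : EdgeLengthsGE P (lam : ℝ))
    (w : Pt d) (hw : w ∈ Set.extremePoints ℝ P)
    (F : Set (Pt d)) (hF : IsFacetOf P F) (hwF : w ∉ F)
    (Δ : Set (Pt d)) (hΔ : Δ = convexHull ℝ (insert w F))
    (ε : ℝ)
    (hε : ε = infDist w ((affineSpan ℝ F : AffineSubspace ℝ (Pt d)) : Set (Pt d)) / ((d : ℝ) + 1))
    (c : ℚ) (hc1 : 2 ≤ c) (hc2 : c ≤ k) :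
    layer ((c : ℝ) • Δ) ((c : ℝ) • F) ε ⊆ cnUnion P (c : ℝ) := by
  classical
  obtain ⟨V, hVrat, hPV⟩ := hP
  set dR : ℝ := (d : ℝ) with hdR
  have hdR2 : (2 : ℝ) ≤ dR := by show (2:ℝ) ≤ (d:ℝ); exact_mod_cast hd
  have hdRpos : (0 : ℝ) < dR := by linarith
  have hdR1 : (0 : ℝ) < dR + 1 := by linarith
  set μ : ℝ := 1 / (dR + 1) with hμ
  set θ : ℝ := 1 - μ with hθ
  have hμpos : 0 < μ := by positivity
  have hμ1 : μ < 1 := by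
    rw [hμ, div_lt_one hdR1]; linarith
  have hθpos : 0 < θ := by rw [hθ]; linarith
  have hθne : θ ≠ 0 := hθpos.ne'
  have hθeq : θ = dR / (dR + 1) := by
    rw [hθ, hμ]; field_simp; ring
  set cR : ℝ := (c : ℝ) with hcR
  have hcR2 : (2 : ℝ) ≤ cR := by show (2:ℝ) ≤ (c:ℝ); exact_mod_cast hc1
  have hcRpos : (0 : ℝ) < cR := by linarith
  -- basic facts about P and F
  have hPconv : Convex ℝ P := by rw [hPV]; exact convex_convexHull ℝ _
  have hex : IsExtreme ℝ P F := hF.1.1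
  have hFP : F ⊆ P := hex.1
  have hFconv : Convex ℝ F := hF.1.2.1
  have hdimF : polyDim F = d - 1 := by
    have := hF.2
    omega
  have hFne : F.Nonempty := by
    by_contra h
    rw [Set.not_nonempty_iff_eq_empty] at h
    have : polyDim F = 0 := by
      rw [h]
      unfold polyDim
      rw [vectorSpan_empty, finrank_bot]
    omega
  have hwP : w ∈ P := hw.1
  have hwV : IsRatPt w := by
    apply hVrat
    have := extremePoints_convexHull_subset (𝕜 := ℝ) (A := (V : Set (Pt d)))
    rw [← hPV] at this
    exact this hw
  -- face as hull of vertices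
  set VF : Finset (Pt d) := V.filter (fun x => x ∈ F) with hVF
  have hVFcoe : (VF : Set (Pt d)) = (V : Set (Pt d)) ∩ F := by
    rw [hVF]; ext x; simp [Finset.mem_filter]
  have hFhull : F = convexHull ℝ (VF : Set (Pt d)) := by
    rw [hVFcoe]
    apply aux_face_eq_convexHull _ hFconv
    rw [← hPV]; exact hex
  have hVFrat : ∀ v ∈ VF, IsRatPt v := fun v hv => hVrat v (Finset.mem_filter.1 hv).1
  have hVFsubF : (VF : Set (Pt d)) ⊆ F := by rw [hVFcoe]; exact inter_subset_right
  -- w is outside the affine span of F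
  have hwspan : w ∉ (affineSpan ℝ F : AffineSubspace ℝ (Pt d)) :=
    aux_not_mem_affineSpan hex VF hFhull hwP hwF hFne
  set h : ℝ := infDist w ((affineSpan ℝ F : AffineSubspace ℝ (Pt d)) : Set (Pt d)) with hh
  have hASne : ((affineSpan ℝ F : AffineSubspace ℝ (Pt d)) : Set (Pt d)).Nonempty := by
    rcases hFne with ⟨f0, hf0⟩
    exact ⟨f0, subset_affineSpan ℝ F hf0⟩
  have hhpos : 0 < h := by
    rw [hh]
    have hcl : IsClosed ((affineSpan ℝ F : AffineSubspace ℝ (Pt d)) : Set (Pt d)) :=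
      AffineSubspace.closed_of_finiteDimensional _
    exact (hcl.notMem_iff_infDist_pos hASne).1 hwspan
  -- the shrunken face Q
  set T : Pt d →ᵃ[ℝ] Pt d := Tmap (μ • w) θ with hT
  set Q : Set (Pt d) := T '' F with hQ
  have hQrat : IsRationalPolytope Q := by
    refine ⟨VF.image T, ?_, ?_⟩
    · intro v hv
      rw [Finset.mem_image] at hv
      obtain ⟨v0, hv0, rfl⟩ := hv
      intro i
      obtain ⟨qw, hqw⟩ := hwV i
      obtain ⟨qv, hqv⟩ := hVFrat v0 hv0 i
      refine ⟨(1 / ((d : ℚ) + 1)) * qw + (1 - 1 / ((d : ℚ) + 1)) * qv, ?_⟩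
      have hTv : (T v0) i = μ * w i + θ * v0 i := by
        rw [hT, Tmap_apply]
        simp [PiLp.add_apply, PiLp.smul_apply, smul_eq_mul]
      rw [hTv, hqw, hqv, hμ, hθ, hμ, hdR]
      push_cast
      ring
    · rw [hQ, hFhull, Finset.coe_image, ← AffineMap.image_convexHull]
  have hQdim : polyDim Q = d - 1 := by
    unfold polyDim
    rw [hQ, hT, aux_vectorSpan_image _ hθne]
    exact hdimF
  have hQedges : EdgeLengthsGE Q ((dR / (dR + 1)) * (lam : ℝ)) := by
    intro v₁ v₂ hedge
    have hv₁Q : v₁ ∈ Q := hedge.2.1 (left_mem_segment ℝ v₁ v₂)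
    have hv₂Q : v₂ ∈ Q := hedge.2.1 (right_mem_segment ℝ v₁ v₂)
    obtain ⟨f₁, hf₁F, hf₁⟩ := hv₁Q
    obtain ⟨f₂, hf₂F, hf₂⟩ := hv₂Q
    have hsegeq : segment ℝ v₁ v₂ = T '' segment ℝ f₁ f₂ := by
      rw [← hf₁, ← hf₂, image_segment]
    have hexF : IsExtreme ℝ F (segment ℝ f₁ f₂) := by
      apply aux_isExtreme_pullback hθne (b := μ • w)
      rw [← hsegeq]
      exact hedge.2
    have hedgeP : IsEdge P f₁ f₂ := by
      constructor
      · intro hcon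
        exact hedge.1 (by rw [← hf₁, ← hf₂, hcon])
      · exact hex.trans hexF
    have hLL := hedges f₁ f₂ hedgeP
    intro u t ht hprim hcoord
    have hcoordF : ∀ i, f₂ i - f₁ i = (t / θ) * (u i : ℝ) := by
      intro i
      have h1 : v₁ i = μ * w i + θ * f₁ i := by
        rw [← hf₁, hT, Tmap_apply]; simp [PiLp.add_apply, PiLp.smul_apply, smul_eq_mul]
      have h2 : v₂ i = μ * w i + θ * f₂ i := by
        rw [← hf₂, hT, Tmap_apply]; simp [PiLp.add_apply, PiLp.smul_apply, smul_eq_mul]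
      have h3 := hcoord i
      rw [h1, h2] at h3
      field_simp
      linarith [h3]
    have := hLL u (t / θ) (by positivity) hprim hcoordF
    rw [← hθeq]
    calc θ * (lam : ℝ) ≤ θ * (t / θ) := by
          apply mul_le_mul_of_nonneg_left this hθpos.le
    _ = t := by field_simp
  -- the rational dilation factor
  set c' : ℚ := c + (c - 1) / (d : ℚ) with hc'
  have hdQpos : (0 : ℚ) < (d : ℚ) := by exact_mod_cast (by omega : 0 < d)
  have hc'1 : 2 ≤ c' := by
    rw [hc']
    have : 0 ≤ (c - 1) / (d : ℚ) := by
      apply div_nonneg (by linarith) hdQpos.le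
    linarith
  have hc'2 : c' ≤ k + (k - 1) / (d : ℚ) := by
    rw [hc']
    have : (c - 1) / (d : ℚ) ≤ (k - 1) / (d : ℚ) := by
      gcongr
    linarith
  have hcover := hyp Q hQrat hQdim hQedges c' hc'1 hc'2
  set c'R : ℝ := ((c' : ℚ) : ℝ) with hc'R
  have hc'Rdef : c'R = cR + (cR - 1) / dR := by
    rw [hc'R, hc', hcR, hdR]
    push_cast
    ring
  have hθc' : θ * (c'R - 1) = cR - 1 := by
    rw [hc'Rdef, hθeq]
    field_simp
    ring
  have hc'R2 : (2:ℝ) ≤ c'R := by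
    rw [hc'R]; exact_mod_cast hc'1
  have hc'Rpos : 0 < c'R := by linarith
  -- main argument
  intro y hy
  obtain ⟨hy1, hy2⟩ := hy
  obtain ⟨z, hzΔ, rfl⟩ := hy1
  -- decompose z along the pyramid
  have hzΔ' : z ∈ convexJoin ℝ {w} F := by
    rw [hΔ, convexHull_insert hFne, hFconv.convexHull_eq] at hzΔ
    exact hzΔ
  rw [mem_convexJoin] at hzΔ'
  obtain ⟨w', hw', f, hfF, hzseg⟩ := hzΔ'
  rw [Set.mem_singleton_iff] at hw'
  rw [hw'] at hzseg
  obtain ⟨a', b', ha', hb', hab, hzeq⟩ := hzseg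
  -- compute the distance to the affine span of the scaled base
  have himg : cR • F = (Tmap 0 cR) '' F := by
    ext x
    simp only [Tmap_apply, zero_add, Set.mem_smul_set, Set.mem_image]
  have hspan_smul : ((affineSpan ℝ (cR • F) : AffineSubspace ℝ (Pt d)) : Set (Pt d))
      = cR • ((affineSpan ℝ F : AffineSubspace ℝ (Pt d)) : Set (Pt d)) := by
    rw [himg, ← AffineSubspace.map_span, AffineSubspace.coe_map]
    ext x
    simp only [Tmap_apply, zero_add, Set.mem_smul_set, Set.mem_image]
  have hdist : infDist (cR • z) ((affineSpan ℝ (cR • F) : AffineSubspace ℝ (Pt d)) : Set (Pt d))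
      = cR * (a' * h) := by
    rw [hspan_smul, aux_infDist_smul hcRpos]
    congr 1
    have hzeq' : z = f + a' • (w - f) := by
      have hb'eq : b' = 1 - a' := by linarith
      rw [← hzeq, hb'eq]
      module
    rw [hzeq', aux_infDist_affine _ (subset_affineSpan ℝ F hfF) _ ha']
    congr 1
    have : f + (w - f) = w := by abel
    rw [this]
  have hyle : cR * (a' * h) ≤ ε := by rw [← hdist]; exact hy2
  have hεμ : ε = μ * h := by
    rw [hε, hμ]
    rw [hh]
    ring
  have haμ : cR * a' ≤ μ := by
    by_contra hcon
    push_neg at hcon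
    have : μ * h < (cR * a') * h := mul_lt_mul_of_pos_right hcon hhpos
    rw [hεμ] at hyle
    nlinarith
  -- apply the covering hypothesis to the point c' • g
  set g : Pt d := T f with hg
  have hgQ : g ∈ Q := by rw [hQ]; exact ⟨f, hfF, rfl⟩
  have hYmem : c'R • g ∈ c'R • Q := Set.smul_mem_smul_set hgQ
  rw [hcover] at hYmem
  obtain ⟨v', hv', x'', hx'', hlat, p', hp', hYeq⟩ := hYmem
  have hv'Q : v' ∈ Set.extremePoints ℝ (Tmap (μ • w) θ '' F) := by
    rw [← hT, ← hQ]; exact hv'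
  obtain ⟨f₀, hf₀F, hv'eq⟩ := aux_extremePoints_pullback hθne hv'Q
  have hf₀P : f₀ ∈ Set.extremePoints ℝ P := hex.extremePoints_subset_extremePoints hf₀F
  obtain ⟨q, hqQ, hx''eq⟩ := hx''
  obtain ⟨f_q, hfqF, hqeq⟩ := by rw [hQ] at hqQ; exact hqQ
  obtain ⟨f_p, hfpF, hpeq⟩ := by rw [hQ] at hp'; exact hp'
  -- the key relation coming from the covering
  have h5 : c'R • ((μ • w : Pt d) + θ • f) = (c'R - 1) • (μ • w + θ • f_q) + (μ • w + θ • f_p) := by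
    have e1 : T f = (μ • w : Pt d) + θ • f := by rw [hT, Tmap_apply]
    have e2 : T f_q = (μ • w : Pt d) + θ • f_q := by rw [hT, Tmap_apply]
    have e3 : T f_p = (μ • w : Pt d) + θ • f_p := by rw [hT, Tmap_apply]
    rw [← e1, ← e2, ← e3, ← hg]
    rw [← hqeq] at hx''eq
    rw [hYeq, ← hx''eq, hpeq]
  have hkeyθ : θ • (c'R • f) = θ • ((c'R - 1) • f_q + f_p) := by
    linear_combination (norm := module) h5
  have hkeyF : c'R • f = (c'R - 1) • f_q + f_p :=
    smul_right_injective (Pt d) hθne hkeyθ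
  -- construct the witnesses
  set p : Pt d := (cR * a') • w + (μ - cR * a') • f + θ • f_p with hp
  have hpmem : p ∈ P := by
    set s2 : ℝ := μ - cR * a' + θ with hs2
    have hs2pos : 0 < s2 := by rw [hs2]; nlinarith
    have hp2 : ((μ - cR * a') / s2) • f + (θ / s2) • f_p ∈ P := by
      apply hPconv (hFP hfF) (hFP hfpF) (div_nonneg (by linarith) hs2pos.le)
        (div_nonneg hθpos.le hs2pos.le)
      field_simp
      rw [hs2]
    have hpsplit : p = (cR * a') • w + s2 • (((μ - cR * a') / s2) • f + (θ / s2) • f_p) := by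
      rw [hp]
      match_scalars
      · ring
      · field_simp
      · field_simp
    rw [hpsplit]
    apply hPconv hwP hp2 (mul_nonneg hcRpos.le ha') hs2pos.le
    rw [hs2, hθ]
    ring
  refine ⟨f₀, hf₀P, (cR - 1) • f_q, Set.smul_mem_smul_set (hFP hfqF), ?_, p, hpmem, ?_⟩
  · -- lattice condition
    have hveceq : (cR - 1) • f_q - (cR - 1) • f₀ = x'' - (c'R - 1) • v' := by
      rw [← hx''eq, ← hqeq, hv'eq, hT, Tmap_apply, Tmap_apply]
      match_scalars
      all_goals first
        | ring1
        | linear_combination hθc'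
        | linear_combination -hθc'
        | linear_combination 2*hθc'
        | linear_combination -2*hθc'
        | linear_combination cR*hθc'
        | linear_combination -cR*hθc'
    rwa [hveceq]
  · -- the decomposition y = x + p
    rw [hp, ← hzeq]
    have hb'eq : b' = 1 - a' := by linarith
    rw [hb'eq]
    have hfp : f_p = c'R • f - (c'R - 1) • f_q := by
      rw [hkeyF]; abel
    rw [hfp]
    match_scalars
    all_goals first
      | ring1
      | linear_combination hθc'
      | linear_combination -hθc'
      | linear_combination 2*hθc'
      | linear_combination -2*hθc'
      | linear_combination cR*hθc'
      | linear_combination -cR*hθc'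
end
end

section
/- Let d be a positive integer and let Δ_d = conv{0, e₁, …, e_d} ⊂ ℝ^d be the standard unimodular simplex, where e₁,…,e_d are the standard basis vectors. If H ⊂ ℝ^d is an affine hyperplane that does not intersect the interior of Δ_d, then max over the vertices v ∈ {0, e₁, …, e_d} of dist(v, H) is at least 1/√d. -/
open Set Metric Pointwise

noncomputable section

lemma distLB {d : ℕ} (a : Pt d) (b : ℝ) (ha : a ≠ 0) (v : Pt d) (c : ℝ)
    (hc : c * ‖a‖ ≤ |(inner ℝ a v : ℝ) - b|) :
    c ≤ infDist v {x : Pt d | (inner ℝ a x : ℝ) = b} := by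
  have hn : (0:ℝ) < ‖a‖ := norm_pos_iff.mpr ha
  have hne : {x : Pt d | (inner ℝ a x : ℝ) = b}.Nonempty := by
    refine ⟨(b / ‖a‖^2) • a, ?_⟩
    simp only [Set.mem_setOf_eq, real_inner_smul_right, real_inner_self_eq_norm_sq]
    field_simp
  by_contra h
  push_neg at h
  obtain ⟨y, hy, hdy⟩ := (infDist_lt_iff hne).mp h
  rw [Set.mem_setOf_eq] at hy
  have h1 : |(inner ℝ a v : ℝ) - b| ≤ ‖a‖ * dist v y := by
    have h2 : (inner ℝ a v : ℝ) - b = inner ℝ a (v - y) := by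
      rw [inner_sub_right, hy]
    rw [h2, dist_eq_norm]
    exact abs_real_inner_le_norm a (v - y)
  nlinarith

lemma singleSum {d : ℕ} (x : Pt d) :
    x = ∑ i, x i • (EuclideanSpace.single i (1:ℝ) : Pt d) := by
  ext j
  rw [WithLp.ofLp_sum, Finset.sum_apply]
  simp [EuclideanSpace.single_apply]

lemma spanTop {d : ℕ} :
    Submodule.span ℝ (Set.range fun i : Fin d => (EuclideanSpace.single i (1:ℝ) : Pt d)) = ⊤ := by
  rw [eq_top_iff]
  intro x _
  rw [singleSum x]
  exact Submodule.sum_mem _ fun i _ => Submodule.smul_mem _ _ (Submodule.subset_span ⟨i, rfl⟩)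

lemma sideLemma {d : ℕ} (hd : 0 < d) (a : Pt d) (b : ℝ) (ha : a ≠ 0)
    (hv : ∀ v ∈ insert (0 : Pt d) (Set.range fun i => EuclideanSpace.single i (1:ℝ)),
      b ≤ (inner ℝ a v : ℝ)) :
    ∃ v ∈ insert (0 : Pt d) (Set.range fun i => EuclideanSpace.single i (1 : ℝ)),
      1 / Real.sqrt d ≤ infDist v {x : Pt d | (inner ℝ a x : ℝ) = b} := by
  have hb0 : b ≤ 0 := by simpa using hv 0 (Set.mem_insert _ _)
  have hbi : ∀ i : Fin d, b ≤ a i := by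
    intro i
    have := hv (EuclideanSpace.single i 1) (Set.mem_insert_of_mem _ ⟨i, rfl⟩)
    rwa [EuclideanSpace.inner_single_right, RCLike.conj_to_real, one_mul] at this
  haveI : Nonempty (Fin d) := ⟨⟨0, hd⟩⟩
  obtain ⟨i, -, hi⟩ := Finset.exists_max_image Finset.univ (fun j => |a j|) Finset.univ_nonempty
  have hsd : (0:ℝ) < Real.sqrt d := Real.sqrt_pos.mpr (by exact_mod_cast hd)
  have hnorm : ‖a‖ ≤ Real.sqrt d * |a i| := by
    rw [EuclideanSpace.norm_eq]
    have h1 : ∑ j, ‖a j‖^2 ≤ (d : ℝ) * |a i|^2 := by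
      calc ∑ j, ‖a j‖^2 ≤ ∑ _j : Fin d, |a i|^2 := Finset.sum_le_sum (fun j _ => by
              rw [Real.norm_eq_abs]
              exact pow_le_pow_left₀ (abs_nonneg _) (hi j (Finset.mem_univ j)) 2)
        _ = (d : ℝ) * |a i|^2 := by simp [Finset.sum_const]
    calc Real.sqrt (∑ j, ‖a j‖^2) ≤ Real.sqrt ((d:ℝ) * |a i|^2) := Real.sqrt_le_sqrt h1
      _ = Real.sqrt d * |a i| := by
          rw [Real.sqrt_mul (Nat.cast_nonneg d), Real.sqrt_sq (abs_nonneg _)]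
  have hkey : 1 / Real.sqrt d * ‖a‖ ≤ |a i| := by
    rw [div_mul_eq_mul_div, one_mul, div_le_iff₀ hsd, mul_comm]
    exact hnorm
  rcases le_or_gt 0 (a i) with hpos | hneg
  · refine ⟨EuclideanSpace.single i 1, Set.mem_insert_of_mem _ ⟨i, rfl⟩, ?_⟩
    apply distLB a b ha
    rw [EuclideanSpace.inner_single_right, RCLike.conj_to_real, one_mul]
    rw [abs_of_nonneg (by linarith : (0:ℝ) ≤ a i - b)]
    rw [abs_of_nonneg hpos] at hkey
    linarith
  · refine ⟨0, Set.mem_insert _ _, ?_⟩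
    apply distLB a b ha
    rw [inner_zero_right]
    rw [abs_of_nonneg (by linarith : (0:ℝ) ≤ 0 - b)]
    rw [abs_of_neg hneg] at hkey
    have := hbi i
    linarith

/-- Lemma 4.1. If an affine hyperplane `H ⊂ ℝ^d` does not meet the interior
of the standard unimodular simplex `Δ_d = conv{0, e₁, …, e_d}`, then some vertex of `Δ_d` is at
Euclidean distance at least `1/√d` from `H`. -/
theorem statement9 (d : ℕ) (hd : 0 < d) (a : Pt d) (b : ℝ) (ha : a ≠ 0)
    (H : Set (Pt d)) (hH : H = {x | (inner ℝ a x : ℝ) = b})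
    (hdisj : H ∩ interior (convexHull ℝ
      (insert (0 : Pt d) (Set.range fun i => EuclideanSpace.single i (1 : ℝ)))) = ∅) :
    ∃ v ∈ insert (0 : Pt d) (Set.range fun i => EuclideanSpace.single i (1 : ℝ)),
      1 / Real.sqrt d ≤ infDist v H := by
  subst hH
  set V : Set (Pt d) := insert (0 : Pt d) (Set.range fun i => EuclideanSpace.single i (1 : ℝ))
    with hVdef
  set S : Set (Pt d) := convexHull ℝ V with hSdef
  have hconv : Convex ℝ S := convex_convexHull ℝ V
  have hspan : affineSpan ℝ S = ⊤ := by
    rw [hSdef, affineSpan_convexHull, ← AffineSubspace.coe_eq_univ_iff, hVdef,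
      affineSpan_insert_zero, spanTop]
    rfl
  obtain ⟨x₀, hx₀⟩ := hconv.interior_nonempty_iff_affineSpan_eq_top.mpr hspan
  have hx0b : (inner ℝ a x₀ : ℝ) ≠ b := by
    intro h
    have : x₀ ∈ {x : Pt d | (inner ℝ a x : ℝ) = b} ∩ interior S := ⟨h, hx₀⟩
    rw [hdisj] at this
    exact this
  have main : ∀ v ∈ V, ¬ (((inner ℝ a x₀ : ℝ) - b) * ((inner ℝ a v : ℝ) - b) < 0) := by
    intro v hvV hlt
    set α : ℝ := (inner ℝ a x₀ : ℝ) - b with hα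
    set β : ℝ := (inner ℝ a v : ℝ) - b with hβ
    have hαβ : α - β ≠ 0 := by
      intro h
      have hab : α = β := by linarith
      rw [hab] at hlt
      nlinarith [sq_nonneg β]
    set t : ℝ := α / (α - β) with ht
    have ht0 : 0 < t ∧ t < 1 := by
      rcases lt_or_gt_of_ne hαβ with h | h
      · have hα0 : α < 0 := by nlinarith
        have hβ0 : 0 < β := by nlinarith
        constructor
        · exact div_pos_of_neg_of_neg hα0 h
        · rw [div_lt_one_of_neg h]; linarith
      · have hα0 : 0 < α := by nlinarith
        have hβ0 : β < 0 := by nlinarith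
        constructor
        · exact div_pos hα0 h
        · rw [div_lt_one h]; linarith
    have hvS : v ∈ S := subset_convexHull ℝ V hvV
    have hp : (1 - t) • x₀ + t • v ∈ interior S :=
      hconv.combo_interior_closure_mem_interior hx₀ (subset_closure hvS)
        (by linarith [ht0.2]) (le_of_lt ht0.1) (by ring)
    have hpH : (inner ℝ a ((1 - t) • x₀ + t • v) : ℝ) = b := by
      rw [inner_add_right, real_inner_smul_right, real_inner_smul_right]
      have hαb : (inner ℝ a x₀ : ℝ) = α + b := by rw [hα]; ring
      have hβb : (inner ℝ a v : ℝ) = β + b := by rw [hβ]; ring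
      rw [hαb, hβb]
      have h1 : (1 - t) * α + t * β = 0 := by
        rw [ht]
        field_simp
        ring
      nlinarith [h1]
    have : ((1 - t) • x₀ + t • v : Pt d) ∈
        {x : Pt d | (inner ℝ a x : ℝ) = b} ∩ interior S := ⟨hpH, hp⟩
    rw [hdisj] at this
    exact this
  rcases lt_or_gt_of_ne hx0b with hlt | hgt
  · -- inner ℝ a x₀ < b : all vertices have inner ℝ a v ≤ b, use -a, -b
    have heq : {x : Pt d | (inner ℝ a x : ℝ) = b} = {x : Pt d | (inner ℝ (-a) x : ℝ) = -b} := by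
      ext x
      simp [inner_neg_left]
    rw [heq]
    apply sideLemma hd (-a) (-b) (neg_ne_zero.mpr ha)
    intro v hvV
    have := main v hvV
    rw [inner_neg_left]
    by_contra hc
    push_neg at hc
    apply this
    have hvb : (inner ℝ a v : ℝ) > b := by
      simp only [neg_lt_neg_iff] at hc
      linarith [hc]
    nlinarith
  · apply sideLemma hd a b ha
    intro v hvV
    have := main v hvV
    by_contra hc
    push_neg at hc
    exact this (by nlinarith)
end
end

section
/- Let d be a positive integer, l ∈ ℚ with l ≥ 1, and let P ⊂ ℝ^d be a rational polytope of dimension d all of whose edges have lattice length at least l·d·(d+1). Let v be a vertex of P and let v₁,…,v_d be vertices of P such that each segment [v, v_i] is an edge of P and the vectors v₁−v,…,v_d−v are linearly independent. Set ε_F = width_F(P)/(l(d+1)) for each facet F of P. Then P(v, ε̄) ∩ (v + C) ⊆ P(v, C), where C is the simplicial cone spanned by v₁−v,…,v_d−v. -/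
open Set Metric Pointwise
open RealInnerProductSpace

noncomputable section

lemma aux_infDist_hyperplane {d : ℕ} (w : Pt d) (hw : ‖w‖ = 1) (c : ℝ) (z : Pt d) :
    infDist z {x : Pt d | ⟪w, x⟫ = c} = |⟪w, z⟫ - c| := by
  have hne : ({x : Pt d | ⟪w, x⟫ = c}).Nonempty := by
    refine ⟨z - (⟪w, z⟫ - c) • w, ?_⟩
    simp only [Set.mem_setOf_eq, inner_sub_right, real_inner_smul_right,
      real_inner_self_eq_norm_sq, hw]
    ring
  apply le_antisymm
  · have hmem : z - (⟪w, z⟫ - c) • w ∈ {x : Pt d | ⟪w, x⟫ = c} := by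
      simp only [Set.mem_setOf_eq, inner_sub_right, real_inner_smul_right,
        real_inner_self_eq_norm_sq, hw]
      ring
    calc infDist z {x : Pt d | ⟪w, x⟫ = c} ≤ dist z (z - (⟪w, z⟫ - c) • w) :=
          infDist_le_dist_of_mem hmem
      _ = |⟪w, z⟫ - c| := by
          rw [dist_eq_norm]
          simp [norm_smul, hw, abs_of_nonneg]
  · refine le_of_not_gt fun hlt => ?_
    obtain ⟨y, hy, hdy⟩ := (infDist_lt_iff hne).mp hlt
    have : |⟪w, z⟫ - c| = |⟪w, z - y⟫| := by
      rw [inner_sub_right]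
      have : ⟪w, y⟫ = c := hy
      rw [this]
    rw [this] at hdy
    have hb := abs_real_inner_le_norm w (z - y)
    rw [hw, one_mul, ← dist_eq_norm] at hb
    exact absurd hdy (not_lt.mpr hb)

lemma aux_rotation_step {d : ℕ} (V : Finset (Pt d))
    (hVd : Module.finrank ℝ (vectorSpan ℝ (V : Set (Pt d))) = d)
    (p : Pt d) (w : Pt d) (c : ℝ)
    (hle : ∀ z ∈ V, ⟪w, z⟫ ≤ c) (hatt : ∃ z ∈ V, ⟪w, z⟫ = c) (hgap : c < ⟪w, p⟫)
    (hk : Module.finrank ℝ (vectorSpan ℝ {z ∈ (V : Set (Pt d)) | ⟪w, z⟫ = c}) + 2 ≤ d) :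
    ∃ w' c', (∀ z ∈ V, ⟪w', z⟫ ≤ c') ∧ (∃ z ∈ V, ⟪w', z⟫ = c') ∧ c' < ⟪w', p⟫ ∧
      Module.finrank ℝ (vectorSpan ℝ {z ∈ (V : Set (Pt d)) | ⟪w, z⟫ = c}) + 1 ≤
        Module.finrank ℝ (vectorSpan ℝ {z ∈ (V : Set (Pt d)) | ⟪w', z⟫ = c'}) := by
  classical
  obtain ⟨s0, hs0V, hs0c⟩ := hatt
  set Sset : Set (Pt d) := {z ∈ (V : Set (Pt d)) | ⟪w, z⟫ = c} with hSset
  have hs0S : s0 ∈ Sset := ⟨hs0V, hs0c⟩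
  set W : Submodule ℝ (Pt d) :=
    vectorSpan ℝ Sset ⊔ Submodule.span ℝ {p - s0} with hW
  have hrankW : Module.finrank ℝ W ≤ Module.finrank ℝ (vectorSpan ℝ Sset) + 1 := by
    have h1 := Submodule.finrank_sup_add_finrank_inf_eq (vectorSpan ℝ Sset)
      (Submodule.span ℝ {p - s0})
    have h2 : Module.finrank ℝ (Submodule.span ℝ ({p - s0} : Set (Pt d))) ≤ 1 := by
      by_cases h : p - s0 = 0
      · rw [h, Submodule.span_zero_singleton]
        simp
      · rw [finrank_span_singleton h]
    rw [← hW] at h1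
    omega
  have hWtop : W ≠ ⊤ := by
    intro htop
    have : Module.finrank ℝ W = d := by
      rw [htop]
      simp [finrank_euclideanSpace_fin]
    omega
  have hexu : ∃ u ∈ Wᗮ, ∃ z ∈ V, 0 < ⟪u, z - s0⟫ := by
    by_contra hno
    push_neg at hno
    have hall : ∀ u ∈ Wᗮ, ∀ z ∈ V, ⟪u, z - s0⟫ = 0 := by
      intro u hu z hz
      have h1 := hno u hu z hz
      have h2 := hno (-u) (Submodule.neg_mem _ hu) z hz
      rw [inner_neg_left] at h2
      linarith
    have hsub : vectorSpan ℝ (V : Set (Pt d)) ≤ W := by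
      rw [vectorSpan_eq_span_vsub_set_right ℝ (Finset.mem_coe.mpr hs0V), Submodule.span_le]
      rintro _ ⟨z, hz, rfl⟩
      have : z -ᵥ s0 ∈ Wᗮᗮ := by
        rw [Submodule.mem_orthogonal]
        intro u hu
        show ⟪u, z - s0⟫ = 0
        exact hall u hu z hz
      rwa [Submodule.orthogonal_orthogonal] at this
    have := Submodule.finrank_mono hsub
    have hmono : Module.finrank ℝ (vectorSpan ℝ Sset) + 2 ≤ d := hk
    omega
  obtain ⟨u, huW, z1, hz1V, hz1pos⟩ := hexu
  have huS : ∀ z ∈ Sset, ⟪u, z⟫ = ⟪u, s0⟫ := by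
    intro z hz
    have hv : z - s0 ∈ W := le_sup_left (α := Submodule ℝ (Pt d))
      (vsub_mem_vectorSpan ℝ hz hs0S)
    have := (Submodule.mem_orthogonal _ _).mp huW (z - s0) hv
    rw [real_inner_comm] at this
    rw [inner_sub_right] at this
    linarith
  have hup : ⟪u, p⟫ = ⟪u, s0⟫ := by
    have hv : p - s0 ∈ W := le_sup_right (α := Submodule ℝ (Pt d))
      (Submodule.mem_span_singleton_self _)
    have := (Submodule.mem_orthogonal _ _).mp huW (p - s0) hv
    rw [real_inner_comm] at this
    rw [inner_sub_right] at this
    linarith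
  set b : ℝ := ⟪u, s0⟫ with hb
  set T : Finset (Pt d) := V.filter (fun z => b < ⟪u, z⟫) with hT
  have hz1T : z1 ∈ T := by
    rw [hT, Finset.mem_filter]
    refine ⟨hz1V, ?_⟩
    rw [inner_sub_right] at hz1pos
    linarith
  have hTne : T.Nonempty := ⟨z1, hz1T⟩
  have hTlt : ∀ z ∈ T, ⟪w, z⟫ < c := by
    intro z hz
    rw [hT, Finset.mem_filter] at hz
    rcases lt_or_eq_of_le (hle z hz.1) with h | h
    · exact h
    · exfalso
      have : z ∈ Sset := ⟨hz.1, h⟩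
      have := huS z this
      linarith [hz.2]
  obtain ⟨zs, hzsT, hzsmin⟩ := T.exists_min_image (fun z => (c - ⟪w, z⟫) / (⟪u, z⟫ - b)) hTne
  have hzsT' : zs ∈ V ∧ b < ⟪u, zs⟫ := by
    have := hzsT
    rw [hT, Finset.mem_filter] at this
    exact this
  have hzsV : zs ∈ V := hzsT'.1
  have hzsb : b < ⟪u, zs⟫ := hzsT'.2
  set θ : ℝ := (c - ⟪w, zs⟫) / (⟪u, zs⟫ - b) with hθ
  have hθpos : 0 < θ := div_pos (by linarith [hTlt zs hzsT]) (by linarith)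
  refine ⟨w + θ • u, c + θ * b, ?_, ⟨zs, hzsV, ?_⟩, ?_, ?_⟩
  · intro z hz
    rw [inner_add_left, real_inner_smul_left]
    rcases le_or_gt (⟪u, z⟫) b with h | h
    · have := hle z hz
      nlinarith
    · have hzT : z ∈ T := by
        rw [hT, Finset.mem_filter]
        exact ⟨hz, h⟩
      have hmin := hzsmin z hzT
      have hd : 0 < ⟪u, z⟫ - b := by linarith
      have h1 := (le_div_iff₀ hd).mp hmin
      nlinarith [h1]
  · rw [inner_add_left, real_inner_smul_left]
    have hd : 0 < ⟪u, zs⟫ - b := by linarith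
    have h1 : θ * (⟪u, zs⟫ - b) = c - ⟪w, zs⟫ := by
      rw [hθ]
      exact div_mul_cancel₀ _ hd.ne'
    have h2 : θ * ⟪u, zs⟫ - θ * b = c - ⟪w, zs⟫ := by
      rw [← h1]; ring
    linarith
  · rw [inner_add_left, real_inner_smul_left, hup]
    linarith
  · have hsub : Sset ⊆ {z ∈ (V : Set (Pt d)) | ⟪w + θ • u, z⟫ = c + θ * b} := by
      rintro z ⟨hzV, hzc⟩
      refine ⟨hzV, ?_⟩
      rw [inner_add_left, real_inner_smul_left, hzc, huS z ⟨hzV, hzc⟩]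
    have hzsmem : zs ∈ {z ∈ (V : Set (Pt d)) | ⟪w + θ • u, z⟫ = c + θ * b} := by
      refine ⟨hzsV, ?_⟩
      rw [inner_add_left, real_inner_smul_left]
      have hd : 0 < ⟪u, zs⟫ - b := by linarith
      have h1 : θ * (⟪u, zs⟫ - b) = c - ⟪w, zs⟫ := by
        rw [hθ]
        exact div_mul_cancel₀ _ hd.ne'
      have h2 : θ * ⟪u, zs⟫ - θ * b = c - ⟪w, zs⟫ := by
        rw [← h1]; ring
      linarith
    have hvmem : zs - s0 ∈ vectorSpan ℝ {z ∈ (V : Set (Pt d)) | ⟪w + θ • u, z⟫ = c + θ * b} :=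
      vsub_mem_vectorSpan ℝ hzsmem (hsub hs0S)
    have hvnot : zs - s0 ∉ vectorSpan ℝ Sset := by
      intro hmem
      have hvW : zs - s0 ∈ W := le_sup_left (α := Submodule ℝ (Pt d)) hmem
      have := (Submodule.mem_orthogonal _ _).mp huW (zs - s0) hvW
      rw [real_inner_comm, inner_sub_right] at this
      linarith
    have hlt : vectorSpan ℝ Sset <
        vectorSpan ℝ {z ∈ (V : Set (Pt d)) | ⟪w + θ • u, z⟫ = c + θ * b} := by
      refine lt_of_le_of_ne (vectorSpan_mono ℝ hsub) ?_
      intro heq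
      rw [heq] at hvnot
      exact hvnot hvmem
    exact Submodule.finrank_lt_finrank_of_lt hlt

lemma aux_facet_functional {d : ℕ} (hd : 0 < d) (V : Finset (Pt d))
    (hVd : Module.finrank ℝ (vectorSpan ℝ (V : Set (Pt d))) = d)
    (p : Pt d) (hp : p ∉ convexHull ℝ (V : Set (Pt d))) :
    ∃ (w : Pt d) (c : ℝ), ‖w‖ = 1 ∧ (∀ z ∈ V, ⟪w, z⟫ ≤ c) ∧ c < ⟪w, p⟫ ∧
      (∃ z ∈ V, ⟪w, z⟫ = c) ∧
      d - 1 ≤ Module.finrank ℝ (vectorSpan ℝ {z ∈ (V : Set (Pt d)) | ⟪w, z⟫ = c}) := by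
  classical
  have hVne : V.Nonempty := by
    by_contra h
    rw [Finset.not_nonempty_iff_eq_empty] at h
    rw [h, Finset.coe_empty, vectorSpan_empty] at hVd
    rw [finrank_bot] at hVd
    omega
  have hconv : Convex ℝ (convexHull ℝ (V : Set (Pt d))) := convex_convexHull ℝ _
  have hclosed : IsClosed (convexHull ℝ (V : Set (Pt d))) :=
    (V.finite_toSet.isCompact_convexHull ℝ).isClosed
  obtain ⟨f, r, hfr, hrp⟩ := geometric_hahn_banach_closed_point hconv hclosed hp
  set w0 : Pt d := (InnerProductSpace.toDual ℝ (Pt d)).symm f with hw0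
  have hw0app : ∀ z : Pt d, ⟪w0, z⟫ = f z := fun z => InnerProductSpace.toDual_symm_apply
  have main : ∀ j : ℕ, ∃ (w : Pt d) (c : ℝ), (∀ z ∈ V, ⟪w, z⟫ ≤ c) ∧
      (∃ z ∈ V, ⟪w, z⟫ = c) ∧ c < ⟪w, p⟫ ∧
      min (d - 1) j ≤ Module.finrank ℝ (vectorSpan ℝ {z ∈ (V : Set (Pt d)) | ⟪w, z⟫ = c}) := by
    intro j
    induction j with
    | zero =>
      obtain ⟨zm, hzmV, hzm⟩ := V.exists_max_image (fun z => ⟪w0, z⟫) hVne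
      refine ⟨w0, ⟪w0, zm⟫, fun z hz => hzm z hz, ⟨zm, hzmV, rfl⟩, ?_, by simp⟩
      have h1 : f zm < r := hfr zm (subset_convexHull ℝ _ (Finset.mem_coe.mpr hzmV))
      rw [hw0app, hw0app]
      linarith
    | succ n ih =>
      obtain ⟨w, c, hle, hatt, hgap, hrank⟩ := ih
      by_cases hbig : d - 1 ≤ Module.finrank ℝ (vectorSpan ℝ {z ∈ (V : Set (Pt d)) | ⟪w, z⟫ = c})
      · exact ⟨w, c, hle, hatt, hgap, le_trans (min_le_left _ _) hbig⟩
      · have hk : Module.finrank ℝ (vectorSpan ℝ {z ∈ (V : Set (Pt d)) | ⟪w, z⟫ = c}) + 2 ≤ d := by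
          omega
        obtain ⟨w', c', hle', hatt', hgap', hrank'⟩ :=
          aux_rotation_step V hVd p w c hle hatt hgap hk
        refine ⟨w', c', hle', hatt', hgap', ?_⟩
        have : min (d-1) n ≤
            Module.finrank ℝ (vectorSpan ℝ {z ∈ (V : Set (Pt d)) | ⟪w, z⟫ = c}) := hrank
        omega
  obtain ⟨w, c, hle, hatt, hgap, hrank⟩ := main (d - 1)
  rw [min_self] at hrank
  have hwne : w ≠ 0 := by
    intro h
    obtain ⟨z, hzV, hz⟩ := hatt
    rw [h] at hgap hz
    simp at hgap hz
    rw [← hz] at hgap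
    exact lt_irrefl _ hgap
  have hnorm : (0:ℝ) < ‖w‖ := norm_pos_iff.mpr hwne
  refine ⟨‖w‖⁻¹ • w, ‖w‖⁻¹ * c, ?_, ?_, ?_, ?_, ?_⟩
  · rw [norm_smul]
    simp [abs_of_pos (inv_pos.mpr hnorm), inv_mul_cancel₀ hnorm.ne']
  · intro z hz
    rw [real_inner_smul_left]
    exact mul_le_mul_of_nonneg_left (hle z hz) (inv_pos.mpr hnorm).le
  · rw [real_inner_smul_left]
    exact (mul_lt_mul_iff_right₀ (inv_pos.mpr hnorm)).mpr hgap
  · obtain ⟨z, hzV, hz⟩ := hatt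
    exact ⟨z, hzV, by rw [real_inner_smul_left, hz]⟩
  · have hsetEq : {z ∈ (V : Set (Pt d)) | ⟪‖w‖⁻¹ • w, z⟫ = ‖w‖⁻¹ * c} =
        {z ∈ (V : Set (Pt d)) | ⟪w, z⟫ = c} := by
      ext z
      simp only [Set.mem_setOf_eq, real_inner_smul_left]
      constructor
      · rintro ⟨h1, h2⟩
        exact ⟨h1, by field_simp at h2; exact h2⟩
      · rintro ⟨h1, h2⟩
        exact ⟨h1, by rw [h2]⟩
    rw [hsetEq]
    exact hrank

lemma aux_inner_linear {d : ℕ} (w : Pt d) : IsLinearMap ℝ (fun z : Pt d => ⟪w, z⟫) :=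
  ⟨fun x y => inner_add_right w x y, fun c x => real_inner_smul_right w x c⟩

lemma aux_facet_props {d : ℕ} (hd : 0 < d) (V : Finset (Pt d))
    (hVd : Module.finrank ℝ (vectorSpan ℝ (V : Set (Pt d))) = d)
    (w : Pt d) (c : ℝ) (hw1 : ‖w‖ = 1)
    (hle : ∀ z ∈ V, ⟪w, z⟫ ≤ c) (hatt : ∃ z ∈ V, ⟪w, z⟫ = c)
    (hrank : d - 1 ≤ Module.finrank ℝ (vectorSpan ℝ {z ∈ (V : Set (Pt d)) | ⟪w, z⟫ = c})) :
    (∀ z ∈ convexHull ℝ (V : Set (Pt d)), ⟪w, z⟫ ≤ c) ∧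
    IsExtreme ℝ (convexHull ℝ (V : Set (Pt d)))
      (convexHull ℝ (V : Set (Pt d)) ∩ {z | ⟪w, z⟫ = c}) ∧
    Convex ℝ (convexHull ℝ (V : Set (Pt d)) ∩ {z | ⟪w, z⟫ = c}) ∧
    IsClosed (convexHull ℝ (V : Set (Pt d)) ∩ {z | ⟪w, z⟫ = c}) ∧
    Module.finrank ℝ (vectorSpan ℝ (convexHull ℝ (V : Set (Pt d)) ∩ {z | ⟪w, z⟫ = c})) = d - 1 ∧
    ((affineSpan ℝ (convexHull ℝ (V : Set (Pt d)) ∩ {z | ⟪w, z⟫ = c}) :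
        AffineSubspace ℝ (Pt d)) : Set (Pt d)) = {z | ⟪w, z⟫ = c} := by
  classical
  set P : Set (Pt d) := convexHull ℝ (V : Set (Pt d)) with hP
  set F : Set (Pt d) := P ∩ {z | ⟪w, z⟫ = c} with hF
  have hwne : w ≠ 0 := by
    intro h
    rw [h, norm_zero] at hw1
    norm_num at hw1
  have hPle : ∀ z ∈ P, ⟪w, z⟫ ≤ c := by
    intro z hz
    have : P ⊆ {z | ⟪w, z⟫ ≤ c} :=
      convexHull_min (fun z hz => hle z hz) (convex_halfSpace_le (aux_inner_linear w) c)
    exact this hz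
  obtain ⟨s0, hs0V, hs0c⟩ := hatt
  have hs0F : s0 ∈ F := ⟨subset_convexHull ℝ _ (Finset.mem_coe.mpr hs0V), hs0c⟩
  set K : Submodule ℝ (Pt d) := LinearMap.ker ((aux_inner_linear w).mk' : Pt d →ₗ[ℝ] ℝ) with hK
  have hKmem : ∀ z : Pt d, z ∈ K ↔ ⟪w, z⟫ = 0 := by
    intro z
    rw [hK, LinearMap.mem_ker]
    rfl
  have hKrank : Module.finrank ℝ K = d - 1 := by
    have h1 := LinearMap.finrank_range_add_finrank_ker
      ((aux_inner_linear w).mk' : Pt d →ₗ[ℝ] ℝ)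
    have hrange : Module.finrank ℝ
        (LinearMap.range ((aux_inner_linear w).mk' : Pt d →ₗ[ℝ] ℝ)) = 1 := by
      have hne : LinearMap.range ((aux_inner_linear w).mk' : Pt d →ₗ[ℝ] ℝ) ≠ ⊥ := by
        intro h
        have : (⟪w, w⟫ : ℝ) ∈ LinearMap.range ((aux_inner_linear w).mk' : Pt d →ₗ[ℝ] ℝ) :=
          ⟨w, rfl⟩
        rw [h, Submodule.mem_bot] at this
        rw [real_inner_self_eq_norm_sq, hw1] at this
        norm_num at this
      have hle1 : Module.finrank ℝ
          (LinearMap.range ((aux_inner_linear w).mk' : Pt d →ₗ[ℝ] ℝ)) ≤ 1 := by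
        have := Submodule.finrank_le (LinearMap.range ((aux_inner_linear w).mk' : Pt d →ₗ[ℝ] ℝ))
        simpa using this
      have hge1 : 0 < Module.finrank ℝ
          (LinearMap.range ((aux_inner_linear w).mk' : Pt d →ₗ[ℝ] ℝ)) := by
        rcases Nat.eq_zero_or_pos (Module.finrank ℝ
          (LinearMap.range ((aux_inner_linear w).mk' : Pt d →ₗ[ℝ] ℝ))) with h | h
        · exact absurd (Submodule.finrank_eq_zero.mp h) hne
        · exact h
      omega
    have hdim : Module.finrank ℝ (EuclideanSpace ℝ (Fin d)) = d := by
      simp [finrank_euclideanSpace_fin]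
    rw [hdim, hrange, ← hK] at h1
    omega
  have hFK : vectorSpan ℝ F ≤ K := by
    rw [vectorSpan_def, Submodule.span_le]
    rintro v hv
    rw [Set.mem_vsub] at hv
    obtain ⟨z1, hz1, z2, hz2, rfl⟩ := hv
    rw [SetLike.mem_coe, hKmem]
    show ⟪w, z1 - z2⟫ = 0
    rw [inner_sub_right, hz1.2, hz2.2]
    ring
  have hSsub : {z ∈ (V : Set (Pt d)) | ⟪w, z⟫ = c} ⊆ F := by
    rintro z ⟨hzV, hzc⟩
    exact ⟨subset_convexHull ℝ _ hzV, hzc⟩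
  have hFrank : Module.finrank ℝ (vectorSpan ℝ F) = d - 1 := by
    have h1 : d - 1 ≤ Module.finrank ℝ (vectorSpan ℝ F) :=
      le_trans hrank (Submodule.finrank_mono (vectorSpan_mono ℝ hSsub))
    have h2 : Module.finrank ℝ (vectorSpan ℝ F) ≤ d - 1 := by
      have := Submodule.finrank_mono hFK
      omega
    omega
  refine ⟨hPle, ?_, ?_, ?_, hFrank, ?_⟩
  · constructor
    · exact Set.inter_subset_left
    · intro x1 hx1 x2 hx2 x hx hseg
      obtain ⟨a, b, ha, hb, hab, habx⟩ := hseg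
      have hxc : ⟪w, x⟫ = c := hx.2
      have hx12 : a * ⟪w, x1⟫ + b * ⟪w, x2⟫ = c := by
        rw [← hxc, ← habx, inner_add_right, real_inner_smul_right, real_inner_smul_right]
      have hsum : a * c + b * c = c := by
        rw [← add_mul, hab, one_mul]
      have h1 : ⟪w, x1⟫ = c := by
        by_contra h
        have hlt : ⟪w, x1⟫ < c := lt_of_le_of_ne (hPle x1 hx1) h
        have h2 := hPle x2 hx2
        nlinarith [mul_pos ha (sub_pos.mpr hlt), mul_nonneg hb.le (sub_nonneg.mpr h2), hsum]
      have h2 : ⟪w, x2⟫ = c := by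
        by_contra h
        have hlt : ⟪w, x2⟫ < c := lt_of_le_of_ne (hPle x2 hx2) h
        have h1' := hPle x1 hx1
        nlinarith [mul_pos hb (sub_pos.mpr hlt), mul_nonneg ha.le (sub_nonneg.mpr h1'), hsum]
      exact ⟨hx1, h1⟩
  · exact (convex_convexHull ℝ _).inter (convex_hyperplane (aux_inner_linear w) c)
  · refine ((V.finite_toSet.isCompact_convexHull ℝ).isClosed).inter ?_
    exact isClosed_eq (Continuous.inner continuous_const continuous_id) continuous_const
  · set p0 : Pt d := c • w with hp0
    have hp0mem : ⟪w, p0⟫ = c := by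
      rw [hp0, real_inner_smul_right, real_inner_self_eq_norm_sq, hw1]
      ring
    set HS : AffineSubspace ℝ (Pt d) := AffineSubspace.mk' p0 K with hHS
    have hHScoe : (HS : Set (Pt d)) = {z | ⟪w, z⟫ = c} := by
      ext z
      rw [hHS, SetLike.mem_coe, AffineSubspace.mem_mk', hKmem]
      show ⟪w, z - p0⟫ = 0 ↔ z ∈ {z | ⟪w, z⟫ = c}
      rw [inner_sub_right, hp0mem]
      constructor
      · intro h
        show ⟪w, z⟫ = c
        linarith
      · intro h
        have h' : ⟪w, z⟫ = c := h
        linarith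
    have hle' : affineSpan ℝ F ≤ HS := by
      rw [affineSpan_le, hHScoe]
      exact fun z hz => hz.2
    have hdir : (affineSpan ℝ F).direction = HS.direction := by
      have hd1 : (affineSpan ℝ F).direction ≤ HS.direction := AffineSubspace.direction_le hle'
      have hd2 : HS.direction = K := AffineSubspace.direction_mk' p0 K
      apply Submodule.eq_of_le_of_finrank_le hd1
      rw [hd2, hKrank, direction_affineSpan, hFrank]
    have haffEq : affineSpan ℝ F = HS := by
      apply AffineSubspace.ext_of_direction_eq hdir
      refine ⟨s0, subset_affineSpan ℝ F hs0F, ?_⟩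
      rw [hHScoe]
      exact hs0c
    rw [haffEq, hHScoe]

lemma aux_inner_corner {d : ℕ} (w v : Pt d) (coef : Fin d → ℝ) (x : Fin d → Pt d) :
    ⟪w, v + ∑ i, coef i • x i⟫ = ⟪w, v⟫ + ∑ i, coef i * ⟪w, x i⟫ := by
  rw [inner_add_right, inner_sum]
  congr 1
  exact Finset.sum_congr rfl fun i _ => real_inner_smul_right w (x i) (coef i)

/-- Lemma 4.3. Corner parallelepipedal covers: with `C` the simplicial cone
spanned by the edge directions `v₁ - v, …, v_d - v` at the vertex `v`, and `xᵢ` the primitive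
integer vector in the direction of `vᵢ - v`, one has `P(v, ε̄) ∩ (v + C) ⊆ P(v, C)`. -/
theorem statement10 (d : ℕ) (hd : 0 < d) (l : ℚ) (hl : 1 ≤ l)
    (P : Set (Pt d)) (hP : IsRationalPolytope P) (hdim : polyDim P = d)
    (hedges : EdgeLengthsGE P ((l : ℝ) * (d : ℝ) * ((d : ℝ) + 1)))
    (v : Pt d) (hv : v ∈ Set.extremePoints ℝ P)
    (vv : Fin d → Pt d) (hvvvert : ∀ i, vv i ∈ Set.extremePoints ℝ P)
    (hvedge : ∀ i, IsEdge P v (vv i))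
    (hind : LinearIndependent ℝ (fun i => vv i - v))
    (u : Fin d → Fin d → ℤ) (t : Fin d → ℝ)
    (hprim : ∀ i, IsPrimitive (u i)) (ht : ∀ i, 0 < t i)
    (hu : ∀ i j, (vv i) j - v j = t i * (u i j : ℝ))
    (x : Fin d → Pt d) (hx : ∀ i j, (x i) j = (u i j : ℝ))
    (C : Set (Pt d))
    (hC : C = {y | ∃ lam : Fin d → ℝ, (∀ i, 0 ≤ lam i) ∧ y = ∑ i, lam i • (vv i - v)})
    (PvC : Set (Pt d))
    (hPvC : PvC = ⋃ a ∈ {a : Fin d → ℕ |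
        Parallelepiped (v + ∑ i, (a i : ℝ) • x i) x ⊆ P},
      Parallelepiped (v + ∑ i, (a i : ℝ) • x i) x)
    (Pvε : Set (Pt d))
    (hPvε : Pvε = closure (P \ ⋃ F ∈ {F | IsFacetOf P F ∧ v ∉ F},
      layer P F (facetWidth P F / ((l : ℝ) * ((d : ℝ) + 1))))) :
    Pvε ∩ ((v + ·) '' C) ⊆ PvC  := by
  classical
  obtain ⟨V, -, hPV⟩ := hP
  have hPclosed : IsClosed P := hPV ▸ (V.finite_toSet.isCompact_convexHull ℝ).isClosed
  have hvP : v ∈ P := hv.1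
  have hvvP : ∀ i, vv i ∈ P := fun i => (hvvvert i).1
  have hrankV : Module.finrank ℝ (vectorSpan ℝ (V : Set (Pt d))) = d := by
    have h := hdim
    rw [hPV] at h
    unfold polyDim at h
    rwa [← direction_affineSpan, affineSpan_convexHull, direction_affineSpan] at h
  have hextV : Set.extremePoints ℝ P ⊆ (V : Set (Pt d)) := by
    rw [hPV]; exact extremePoints_convexHull_subset
  have hL : ∀ i, (l : ℝ) * d * ((d:ℝ)+1) ≤ t i := fun i =>
    hedges v (vv i) (hvedge i) (u i) (t i) (ht i) (hprim i) (fun j => hu i j)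
  have hl1 : (1:ℝ) ≤ (l:ℝ) := by exact_mod_cast hl
  have hd1 : (1:ℝ) ≤ (d:ℝ) := by exact_mod_cast hd
  have hLpos : (0:ℝ) < (l:ℝ) * d * ((d:ℝ)+1) := by
    have hlp : (0:ℝ) < (l:ℝ) := by linarith
    have hdp : (0:ℝ) < (d:ℝ) := by linarith
    exact mul_pos (mul_pos hlp hdp) (by linarith)
  have hxs : ∀ i, vv i - v = t i • x i := by
    intro i
    ext j
    simp only [PiLp.sub_apply, PiLp.smul_apply, smul_eq_mul]
    rw [hx i j]
    exact hu i j
  rintro y ⟨hyPvε, hyC⟩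
  obtain ⟨cv, hcvC, rfl⟩ := hyC
  rw [hC] at hcvC
  obtain ⟨lam, hlam0, rfl⟩ := hcvC
  set ξ : Fin d → ℝ := fun i => lam i * t i with hξ
  have hξ0 : ∀ i, 0 ≤ ξ i := fun i => mul_nonneg (hlam0 i) (ht i).le
  have hyeq : v + ∑ i, lam i • (vv i - v) = v + ∑ i, ξ i • x i := by
    congr 1
    refine Finset.sum_congr rfl fun i _ => ?_
    rw [hxs i, smul_smul]
  set a : Fin d → ℕ := fun i => ⌊ξ i⌋₊ with ha
  have haξ : ∀ i, (a i : ℝ) ≤ ξ i := fun i => Nat.floor_le (hξ0 i)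
  have haξ1 : ∀ i, ξ i < (a i : ℝ) + 1 := fun i => Nat.lt_floor_add_one (ξ i)
  have hyP : v + ∑ i, lam i • (vv i - v) ∈ P := by
    have h1 : Pvε ⊆ P := by
      rw [hPvε]
      exact closure_minimal Set.diff_subset hPclosed
    exact h1 hyPvε
  have hkey : Parallelepiped (v + ∑ i, (a i : ℝ) • x i) x ⊆ P := by
    rintro pt ⟨μ, hμ, rfl⟩
    set coef : Fin d → ℝ := fun i => (a i : ℝ) + μ i with hcoef
    have hpt2 : v + ∑ i, (a i : ℝ) • x i + ∑ i, μ i • x i = v + ∑ i, coef i • x i := by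
      rw [add_assoc, ← Finset.sum_add_distrib]
      congr 1
      refine Finset.sum_congr rfl fun i _ => ?_
      rw [← add_smul]
    rw [hpt2]
    by_contra hptP
    have hptP' : v + ∑ i, coef i • x i ∉ convexHull ℝ (V : Set (Pt d)) := by
      rwa [← hPV]
    obtain ⟨w, c, hw1, hle, hgap, hatt, hrankS⟩ :=
      aux_facet_functional hd V hrankV _ hptP'
    obtain ⟨hPle0, hExt0, hConvF0, hClosedF0, hFrank0, hAffEq0⟩ :=
      aux_facet_props hd V hrankV w c hw1 hle hatt hrankS
    rw [← hPV] at hPle0 hExt0 hConvF0 hClosedF0 hFrank0 hAffEq0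
    set F : Set (Pt d) := P ∩ {z | ⟪w, z⟫ = c} with hF
    have hwx : ∀ i, ⟪w, x i⟫ = (⟪w, vv i⟫ - ⟪w, v⟫) / t i := by
      intro i
      have h1 : ⟪w, vv i - v⟫ = t i * ⟪w, x i⟫ := by
        rw [hxs i, real_inner_smul_right]
      rw [inner_sub_right] at h1
      rw [eq_div_iff (ht i).ne']
      linarith
    have hinner_pt : ⟪w, v + ∑ i, coef i • x i⟫ = ⟪w, v⟫ + ∑ i, coef i * ⟪w, x i⟫ :=
      aux_inner_corner w v coef x
    rcases eq_or_lt_of_le (hPle0 v hvP) with hvc | hvc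
    · have hptle : ⟪w, v + ∑ i, coef i • x i⟫ ≤ c := by
        rw [hinner_pt]
        have hsum : ∑ i, coef i * ⟪w, x i⟫ ≤ 0 := by
          refine Finset.sum_nonpos fun i _ => ?_
          have hnum : ⟪w, vv i⟫ - ⟪w, v⟫ ≤ 0 := by
            have := hPle0 (vv i) (hvvP i)
            rw [hvc]
            linarith
          have hφ : ⟪w, x i⟫ ≤ 0 := by
            rw [hwx i]
            exact div_nonpos_of_nonpos_of_nonneg hnum (ht i).le
          have hc0 : 0 ≤ coef i := add_nonneg (Nat.cast_nonneg _) (hμ i).1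
          nlinarith
        rw [hvc]
        linarith
      exact absurd hgap (not_lt.mpr hptle)
    · have hFfacet : IsFacetOf P F := by
        refine ⟨⟨hExt0, hConvF0, hClosedF0⟩, ?_⟩
        have h1 : polyDim F = d - 1 := hFrank0
        rw [h1, hdim]
        omega
      have hvF : v ∉ F := fun hvf => absurd hvf.2 (ne_of_lt hvc)
      have hFmem : F ∈ {F' | IsFacetOf P F' ∧ v ∉ F'} := ⟨hFfacet, hvF⟩
      set W : ℝ := facetWidth P F with hW
      set ε : ℝ := W / ((l:ℝ) * ((d:ℝ) + 1)) with hε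
      have hymem := hyPvε
      rw [hPvε] at hymem
      have hydist : ε ≤ infDist (v + ∑ i, lam i • (vv i - v))
          ((affineSpan ℝ F : AffineSubspace ℝ (Pt d)) : Set (Pt d)) := by
        have hsub : P \ (⋃ F' ∈ {F' | IsFacetOf P F' ∧ v ∉ F'},
            layer P F' (facetWidth P F' / ((l:ℝ) * ((d:ℝ) + 1)))) ⊆
            {z | ε ≤ infDist z ((affineSpan ℝ F : AffineSubspace ℝ (Pt d)) : Set (Pt d))} := by
          rintro z ⟨hzP, hzU⟩
          by_contra hzd
          simp only [Set.mem_setOf_eq, not_le] at hzd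
          exact hzU (Set.mem_biUnion hFmem ⟨hzP, hzd.le⟩)
        have hclosed2 : IsClosed
            {z | ε ≤ infDist z ((affineSpan ℝ F : AffineSubspace ℝ (Pt d)) : Set (Pt d))} :=
          isClosed_le continuous_const (continuous_infDist_pt _)
        exact closure_minimal hsub hclosed2 hymem
      have hyw : ⟪w, v + ∑ i, lam i • (vv i - v)⟫ ≤ c := hPle0 _ hyP
      have hydist2 : ε ≤ c - ⟪w, v + ∑ i, lam i • (vv i - v)⟫ := by
        rw [hAffEq0, aux_infDist_hyperplane w hw1 c _] at hydist
        rwa [abs_of_nonpos (by linarith), neg_sub] at hydist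
      have hbdd : BddAbove ((fun z =>
          infDist z ((affineSpan ℝ F : AffineSubspace ℝ (Pt d)) : Set (Pt d))) ''
          Set.extremePoints ℝ P) :=
        ((V.finite_toSet.subset hextV).image _).bddAbove
      have hWb : ∀ z ∈ Set.extremePoints ℝ P, c - ⟪w, z⟫ ≤ W ∧ 0 ≤ c - ⟪w, z⟫ := by
        intro z hz
        have h1 : infDist z ((affineSpan ℝ F : AffineSubspace ℝ (Pt d)) : Set (Pt d)) ≤ W := by
          rw [hW]
          unfold facetWidth
          exact le_csSup hbdd ⟨z, hz, rfl⟩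
        rw [hAffEq0, aux_infDist_hyperplane w hw1 c z] at h1
        have h2 : ⟪w, z⟫ ≤ c := hPle0 z hz.1
        constructor
        · rwa [abs_of_nonpos (by linarith), neg_sub] at h1
        · linarith
      obtain ⟨hWv, hWv0⟩ := hWb v hv
      have hW0 : 0 ≤ W := le_trans hWv0 hWv
      have hφb : ∀ i, |⟪w, x i⟫| ≤ W / ((l:ℝ) * d * ((d:ℝ) + 1)) := by
        intro i
        obtain ⟨hWvv, -⟩ := hWb (vv i) (hvvvert i)
        have h2 : ⟪w, vv i⟫ ≤ c := hPle0 _ (hvvP i)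
        have h3 : |⟪w, vv i⟫ - ⟪w, v⟫| ≤ W :=
          abs_sub_le_iff.mpr ⟨by linarith, by linarith⟩
        rw [hwx i, abs_div, abs_of_pos (ht i)]
        exact div_le_div₀ hW0 h3 hLpos (hL i)
      have hδ : ∀ i, |coef i - ξ i| ≤ 1 := by
        intro i
        rw [abs_le]
        constructor
        · have := haξ1 i
          have := (hμ i).1
          simp only [hcoef]
          linarith
        · have := haξ i
          have := (hμ i).2
          simp only [hcoef]
          linarith
      have hsumb : ∑ i, (coef i - ξ i) * ⟪w, x i⟫ ≤ ε := by
        calc ∑ i, (coef i - ξ i) * ⟪w, x i⟫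
            ≤ ∑ _i : Fin d, W / ((l:ℝ) * d * ((d:ℝ) + 1)) := by
              refine Finset.sum_le_sum fun i _ => ?_
              calc (coef i - ξ i) * ⟪w, x i⟫ ≤ |(coef i - ξ i) * ⟪w, x i⟫| := le_abs_self _
                _ = |coef i - ξ i| * |⟪w, x i⟫| := abs_mul _ _
                _ ≤ 1 * (W / ((l:ℝ) * d * ((d:ℝ) + 1))) :=
                    mul_le_mul (hδ i) (hφb i) (abs_nonneg _)  zero_le_one
                _ = W / ((l:ℝ) * d * ((d:ℝ) + 1)) := one_mul _
          _ = d * (W / ((l:ℝ) * d * ((d:ℝ) + 1))) := by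
              rw [Finset.sum_const, Finset.card_univ, Fintype.card_fin, nsmul_eq_mul]
          _ = ε := by
              rw [hε]
              have hlne : (l:ℝ) ≠ 0 := by linarith
              have hdne : (d:ℝ) ≠ 0 := by linarith
              have hdp1 : (d:ℝ) + 1 ≠ 0 := by linarith
              field_simp
      have hptle : ⟪w, v + ∑ i, coef i • x i⟫ ≤ c := by
        have hinner_y : ⟪w, v + ∑ i, ξ i • x i⟫ = ⟪w, v⟫ + ∑ i, ξ i * ⟪w, x i⟫ :=
          aux_inner_corner w v ξ x
        have e1 : ⟪w, v + ∑ i, coef i • x i⟫ =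
            ⟪w, v + ∑ i, ξ i • x i⟫ + ∑ i, (coef i - ξ i) * ⟪w, x i⟫ := by
          rw [hinner_pt, hinner_y]
          rw [add_assoc, ← Finset.sum_add_distrib]
          congr 1
          refine Finset.sum_congr rfl fun i _ => ?_
          ring
        rw [e1, ← hyeq]
        linarith
      exact absurd hgap (not_lt.mpr hptle)
  rw [hPvC]
  refine Set.mem_iUnion₂.mpr ⟨a, hkey, ?_⟩
  show v + ∑ i, lam i • (vv i - v) ∈ Parallelepiped (v + ∑ i, (a i : ℝ) • x i) x
  rw [hyeq]
  refine ⟨fun i => ξ i - a i, fun i => ⟨?_, ?_⟩, ?_⟩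
  · show (0:ℝ) ≤ ξ i - (a i : ℝ)
    linarith [haξ i]
  · show ξ i - (a i : ℝ) ≤ 1
    linarith [haξ1 i]
  · rw [add_assoc, ← Finset.sum_add_distrib]
    congr 1
    refine Finset.sum_congr rfl fun i _ => ?_
    rw [← add_smul]
    congr 1
    ring
end
end

section
/- Let a, b ∈ ℚ with b − a ≥ 1 and let P = [a, b] ⊂ ℝ be a rational segment (a 1-dimensional rational polytope, whose lattice length is b − a). Then for every rational c ≥ 2 one has cP = ⋃ (x + P), where the union is over v ∈ {a, b} and all x ∈ (c−1)P ∩ ((c−1)v + ℤ). In other words, every rational segment of lattice length at least 1 is k-convex-normal for every k ∈ ℚ with k ≥ 2. -/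
open Set Metric Pointwise

noncomputable section

theorem real_seg (A B : ℝ) (hab : 1 ≤ B - A) (C : ℝ) (hc : 2 ≤ C) :
    C • Set.Icc A B =
      {y | ∃ v ∈ ({A, B} : Set ℝ),
        ∃ x ∈ (C - 1) • Set.Icc A B,
          (∃ n : ℤ, x - (C - 1) * v = (n : ℝ)) ∧
          ∃ p ∈ Set.Icc A B, y = x + p} := by
  have hC1 : (1:ℝ) ≤ C - 1 := by linarith
  have hCpos : (0:ℝ) < C := by linarith
  ext y
  constructor
  · rintro ⟨z, ⟨hz1, hz2⟩, rfl⟩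
    simp only [smul_eq_mul]
    set s : ℝ := C * z - C * A with hs
    have hs0 : 0 ≤ s := by nlinarith
    have hsU : s ≤ C * (B - A) := by nlinarith
    simp only [Set.mem_setOf_eq, Set.mem_insert_iff, Set.mem_singleton_iff]
    rcases le_or_gt s (B - A) with h1 | h1
    · -- v = A, x = (C-1)A, p = Cz - (C-1)A
      refine ⟨A, Or.inl rfl, (C-1)*A, ⟨A, ⟨le_refl A, by linarith⟩, by simp [smul_eq_mul]⟩,
        ⟨0, by push_cast; ring⟩, C*z - (C-1)*A, ⟨by nlinarith, by nlinarith⟩, by ring⟩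
    · rcases le_or_gt ((C-1)*(B-A)) s with h2 | h2
      · -- v = B, x = (C-1)B, p = Cz - (C-1)B
        refine ⟨B, Or.inr rfl, (C-1)*B, ⟨B, ⟨by linarith, le_refl B⟩, by simp [smul_eq_mul]⟩,
          ⟨0, by push_cast; ring⟩, C*z - (C-1)*B, ⟨by nlinarith, by nlinarith⟩, by ring⟩
      · -- v = A, n = ⌈s - (B-A)⌉
        set n : ℤ := ⌈s - (B - A)⌉ with hn
        have hn1 : s - (B - A) ≤ (n:ℝ) := Int.le_ceil _
        have hn2 : (n:ℝ) < s - (B - A) + 1 := Int.ceil_lt_add_one _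
        have hn0 : (0:ℝ) ≤ (n:ℝ) := by
          have : (0:ℝ) < s - (B-A) := by linarith
          linarith
        have hns : (n:ℝ) ≤ s := by linarith
        have hC1' : (0:ℝ) < C - 1 := by linarith
        refine ⟨A, Or.inl rfl, (C-1)*A + n,
          ⟨A + n/(C-1), ⟨?_, ?_⟩, ?_⟩,
          ⟨n, by ring⟩, C*z - ((C-1)*A + n), ⟨by nlinarith, by nlinarith⟩, by ring⟩
        · have : (0:ℝ) ≤ n/(C-1) := div_nonneg hn0 (le_of_lt hC1')
          linarith
        · rw [← sub_nonneg]
          have : (n:ℝ)/(C-1) ≤ (B-A) := by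
            rw [div_le_iff₀ hC1']; nlinarith
          linarith
        · show (C-1) * (A + (n:ℝ)/(C-1)) = (C-1)*A + n
          rw [mul_add]; congr 1; field_simp
  · rintro ⟨v, hv, x, ⟨z, ⟨hz1, hz2⟩, rfl⟩, _, p, ⟨hp1, hp2⟩, rfl⟩
    refine ⟨((C-1) • z + p)/C, ⟨?_, ?_⟩, ?_⟩
    · simp only [smul_eq_mul]
      rw [le_div_iff₀ hCpos]; nlinarith
    · simp only [smul_eq_mul]
      rw [div_le_iff₀ hCpos]; nlinarith
    · simp only [smul_eq_mul]
      field_simp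


/-- Lemma 5.1(a), `d = 1`. Every rational segment `[a, b] ⊂ ℝ` of lattice
length `b - a ≥ 1` is `k`-convex-normal for every `k ≥ 2`. -/
theorem statement12 (a b : ℚ) (hab : 1 ≤ b - a) (c : ℚ) (hc : 2 ≤ c) :
    (c : ℝ) • Set.Icc (a : ℝ) (b : ℝ) =
      {y | ∃ v ∈ ({(a : ℝ), (b : ℝ)} : Set ℝ),
        ∃ x ∈ ((c : ℝ) - 1) • Set.Icc (a : ℝ) (b : ℝ),
          (∃ n : ℤ, x - ((c : ℝ) - 1) * v = (n : ℝ)) ∧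
          ∃ p ∈ Set.Icc (a : ℝ) (b : ℝ), y = x + p} := by
  exact real_seg a b (by exact_mod_cast (by push_cast; exact_mod_cast hab : (1:ℝ) ≤ (b:ℝ) - a)) c (by exact_mod_cast hc)
end
end
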